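/- arXiv:1806.08262 — 5 statements merged into one kernel-verified Lean document; each statement's English description precedes it below -/
import Mathlib

section
/- Let d be an even positive integer, let δ ≤ d/4 be a positive integer, let 0 < p ≤ q, and set η := d/2 − δ. Then d₁(x⁺, x⁻) = 4q·√(η²q² + 2ηδp²); in particular d₁(x⁺, x⁻) ≥ d·q². -/
open scoped BigOperators
open scoped Matrix
noncomputable section

lemma sum_piecewise {d : ℕ} (a1 a2 a3 : ℕ) (h1 : a1 ≤ a2) (h2 : a2 ≤ a3) (h3 : a3 ≤ d)
    (c1 c2 c3 c4 : ℝ) (f : Fin d → ℝ)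
    (hf : ∀ i : Fin d, f i = if (i:ℕ) < a1 then c1 else if (i:ℕ) < a2 then c2
      else if (i:ℕ) < a3 then c3 else c4) :
    ∑ i, f i = (a1 : ℝ) * c1 + ((a2 - a1 : ℕ) : ℝ) * c2 + ((a3 - a2 : ℕ) : ℝ) * c3
      + ((d - a3 : ℕ) : ℝ) * c4 := by
  set g : ℕ → ℝ := fun n => if n < a1 then c1 else if n < a2 then c2
      else if n < a3 then c3 else c4 with hg
  have h0 : ∑ i : Fin d, f i = ∑ n ∈ Finset.range d, g n := by
    rw [← Fin.sum_univ_eq_sum_range]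
    exact Finset.sum_congr rfl fun i _ => hf i
  have key : ∀ m n : ℕ, ∀ c : ℝ, (∀ k, m ≤ k → k < n → g k = c) →
      ∑ k ∈ Finset.Ico m n, g k = ((n - m : ℕ) : ℝ) * c := by
    intro m n c hc
    calc ∑ k ∈ Finset.Ico m n, g k = ∑ _k ∈ Finset.Ico m n, c :=
          Finset.sum_congr rfl (fun k hk => by
            rw [Finset.mem_Ico] at hk; exact hc k hk.1 hk.2)
      _ = ((n - m : ℕ) : ℝ) * c := by rw [Finset.sum_const, Nat.card_Ico, nsmul_eq_mul]
  rw [h0, Finset.range_eq_Ico,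
    ← Finset.sum_Ico_consecutive g (Nat.zero_le a1) (h1.trans (h2.trans h3)),
    ← Finset.sum_Ico_consecutive g h1 (h2.trans h3),
    ← Finset.sum_Ico_consecutive g h2 h3,
    key 0 a1 c1 (fun k hk1 hk2 => by
      simp only [hg]; split_ifs <;> first | rfl | omega),
    key a1 a2 c2 (fun k hk1 hk2 => by
      simp only [hg]; split_ifs <;> first | rfl | omega),
    key a2 a3 c3 (fun k hk1 hk2 => by
      simp only [hg]; split_ifs <;> first | rfl | omega),
    key a3 d c4 (fun k hk1 hk2 => by
      simp only [hg]; split_ifs <;> first | rfl | omega)]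
  simp [Nat.sub_zero]; ring

lemma trace_sq_eq {n : ℕ} {M : Matrix (Fin n) (Fin n) ℂ} (hM : M.IsHermitian) :
    (M * M).trace = ∑ i, ((hM.eigenvalues i : ℂ)) ^ 2 := by
  set U : Matrix (Fin n) (Fin n) ℂ := (hM.eigenvectorUnitary : Matrix (Fin n) (Fin n) ℂ) with hUdef
  have hU : star U * U = 1 := Unitary.coe_star_mul_self hM.eigenvectorUnitary
  set D : Matrix (Fin n) (Fin n) ℂ :=
    Matrix.diagonal (RCLike.ofReal ∘ hM.eigenvalues) with hDdef
  have hspec : M = U * D * star U := hM.spectral_theorem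
  have hMM : M * M = U * (D * D) * star U := by
    rw [hspec]
    calc U * D * star U * (U * D * star U) = U * D * ((star U * U) * (D * star U)) := by
          simp only [Matrix.mul_assoc]
      _ = U * (D * D) * star U := by rw [hU, Matrix.one_mul]; simp only [Matrix.mul_assoc]
  rw [hMM, Matrix.trace_mul_cycle, ← Matrix.mul_assoc, hU, Matrix.one_mul,
    Matrix.diagonal_mul_diagonal, Matrix.trace_diagonal]
  simp [sq]

lemma eig_cube {n : ℕ} {M : Matrix (Fin n) (Fin n) ℂ} (hM : M.IsHermitian) (c : ℝ)
    (h3 : M * M * M = ((c : ℝ) : ℂ) • M) (i : Fin n) :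
    (hM.eigenvalues i) ^ 3 = c * hM.eigenvalues i := by
  set v : Fin n → ℂ := ⇑(hM.eigenvectorBasis i) with hv
  set μ : ℝ := hM.eigenvalues i with hμ
  have hv1 : M *ᵥ v = μ • v := hM.mulVec_eigenvectorBasis i
  have hvne : v ≠ 0 := by
    have h0 := hM.eigenvectorBasis.orthonormal.ne_zero i
    intro h
    apply h0
    ext j
    exact congrFun h j
  obtain ⟨j, hj⟩ := Function.ne_iff.mp hvne
  simp only [Pi.zero_apply] at hj
  have lhs : (M * M * M) *ᵥ v = (μ ^ 3 : ℝ) • v := by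
    simp only [← Matrix.mulVec_mulVec, hv1, Matrix.mulVec_smul, smul_smul]
    congr 1
    ring
  have rhs : (((c : ℝ) : ℂ) • M) *ᵥ v = (c * μ : ℝ) • v := by
    rw [Matrix.smul_mulVec, hv1]
    funext k
    simp only [Pi.smul_apply, smul_eq_mul, Complex.real_smul]
    push_cast
    ring
  have key : (μ ^ 3 : ℝ) • v = (c * μ : ℝ) • v := by rw [← lhs, h3, rhs]
  have keyj := congrFun key j
  simp only [Pi.smul_apply, Complex.real_smul] at keyj
  have : ((μ ^ 3 : ℝ) : ℂ) = ((c * μ : ℝ) : ℂ) := mul_right_cancel₀ hj keyj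
  exact_mod_cast this

lemma sum_abs_of_cube {n : ℕ} (μ : Fin n → ℝ) (lam : ℝ) (hlam : 0 < lam)
    (hcube : ∀ i, μ i ^ 3 = lam ^ 2 * μ i) (hsq : ∑ i, μ i ^ 2 = 2 * lam ^ 2) :
    ∑ i, |μ i| = 2 * lam := by
  have habs : ∀ i, |μ i| = μ i ^ 2 / lam := by
    intro i
    have h := hcube i
    have h0 : μ i * ((μ i - lam) * (μ i + lam)) = 0 := by nlinarith [h]
    rcases mul_eq_zero.mp h0 with h1 | h1
    · simp [h1]
    · rcases mul_eq_zero.mp h1 with h2 | h2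
      · have he : μ i = lam := by linarith
        rw [he, abs_of_pos hlam]
        field_simp
      · have he : μ i = -lam := by linarith
        rw [he, abs_neg, abs_of_pos hlam]
        field_simp
  rw [Finset.sum_congr rfl (fun i _ => habs i), ← Finset.sum_div, hsq]
  field_simp
open scoped BigOperators

noncomputable section

/-- Map an integer to `Fin d` by reduction mod `d` (requires `0 < d`). -/
def intToFin (d : ℕ) (hd : 0 < d) (z : ℤ) : Fin d :=
  ⟨(z % (d : ℤ)).toNat, by
    have h1 : 0 ≤ z % (d : ℤ) := Int.emod_nonneg z (by exact_mod_cast hd.ne')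
    have h2 : z % (d : ℤ) < (d : ℤ) := Int.emod_lt_of_pos z (by exact_mod_cast hd)
    omega⟩

/-- Circular shift: `(S_ℓ x)(n) = x(((n + ℓ - 1) mod d) + 1)` in 1-based indexing. -/
def shift {d : ℕ} (ℓ : ℤ) (x : Fin d → ℂ) : Fin d → ℂ :=
  fun i => x (intToFin d i.pos ((i : ℤ) + ℓ))

/-- `⟨u,v⟩ = ∑ u(n) conj(v(n))`. -/
def innerC {d : ℕ} (u v : Fin d → ℂ) : ℂ := ∑ n, u n * (starRingEnd ℂ) (v n)

/-- `x ∼ x'` iff `x = e^{iθ} x'` for some real `θ`. -/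
def phaseEquiv {d : ℕ} (x x' : Fin d → ℂ) : Prop :=
  ∃ θ : ℝ, x = fun n => Complex.exp (θ * Complex.I) * x' n

/-- Euclidean norm on `ℂ^d`. -/
def norm2 {d : ℕ} (x : Fin d → ℂ) : ℝ := Real.sqrt (∑ n, ‖x n‖ ^ 2)

/-- `D₂(x,x') = min_θ ‖x - e^{iθ} x'‖₂`. -/
def D2 {d : ℕ} (x x' : Fin d → ℂ) : ℝ :=
  ⨅ θ : ℝ, norm2 (fun n => x n - Complex.exp (θ * Complex.I) * x' n)

/-- `C_{p,q} = {x : p ≤ |x(n)| ≤ q for all n}`. -/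
def Cpq (d : ℕ) (p q : ℝ) : Set (Fin d → ℂ) :=
  {x | ∀ n, p ≤ ‖x n‖ ∧ ‖x n‖ ≤ q}

/-- `‖m‖_∞ = max_k ‖m_k‖_∞`. -/
def maskSup {d K : ℕ} (m : Fin K → Fin d → ℂ) : ℝ :=
  ⨆ k, ⨆ n, ‖m k n‖

/-- The measurement map `Z(x)_{k,ℓ} = |⟨S_{ℓa} m_k, x⟩|`, `1 ≤ k ≤ K`, `1 ≤ ℓ ≤ L`. -/
def Zmap {d K : ℕ} (L : ℕ) (m : Fin K → Fin d → ℂ) (a : ℕ) (x : Fin d → ℂ) :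
    EuclideanSpace ℝ (Fin K × Fin L) :=
  WithLp.toLp 2 fun kl => ‖innerC (shift ((((kl.2 : ℕ) + 1) * a : ℕ) : ℤ) (m kl.1)) x‖

/-- The measurement map `Y(x)_{k,ℓ} = |⟨S_{ℓa} m_k, x⟩|²`. -/
def Ymap {d K : ℕ} (L : ℕ) (m : Fin K → Fin d → ℂ) (a : ℕ) (x : Fin d → ℂ) :
    EuclideanSpace ℝ (Fin K × Fin L) :=
  WithLp.toLp 2 fun kl => ‖innerC (shift ((((kl.2 : ℕ) + 1) * a : ℕ) : ℤ) (m kl.1)) x‖ ^ 2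

/-- The vectors `x^{±}` (sign `ε = ±1`): `q` on positions `1,…,d/2-δ`, `p` on
`d/2-δ+1,…,d/2`, `±q` on `d/2+1,…,d-δ`, and `p` on `d-δ+1,…,d`. -/
def xpm (d δ : ℕ) (p q ε : ℝ) : Fin d → ℂ :=
  fun i => if (i : ℕ) < d / 2 - δ then (q : ℂ)
    else if (i : ℕ) < d / 2 then (p : ℂ)
    else if (i : ℕ) < d - δ then ((ε * q : ℝ) : ℂ)
    else (p : ℂ)

/-- The difference of outer products `x x^* - x' x'^*`. -/
def outerDiff {d : ℕ} (x x' : Fin d → ℂ) : Matrix (Fin d) (Fin d) ℂ :=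
  Matrix.of fun i j => x i * star (x j) - x' i * star (x' j)

lemma outerDiff_isHermitian {d : ℕ} (x x' : Fin d → ℂ) :
    (outerDiff x x').IsHermitian := by
  unfold Matrix.IsHermitian
  ext i j
  simp [outerDiff, Matrix.conjTranspose_apply, star_sub, star_mul, star_star, mul_comm]

/-- `d₁(x,x') = ‖x x^* - x' x'^*‖₁`, the sum of the singular values (for a Hermitian
matrix, the sum of the absolute values of its eigenvalues). -/
def d1 {d : ℕ} (x x' : Fin d → ℂ) : ℝ :=
  ∑ i, |(outerDiff_isHermitian x x').eigenvalues i|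

/-- With `η = d/2 - δ`, `d₁(x⁺,x⁻) = 4q√(η²q² + 2ηδp²) ≥ dq²`. -/
theorem d1_value (d δ : ℕ) (p q : ℝ) (hd0 : 0 < d) (hd : Even d) (hδ : 0 < δ)
    (hδd : 4 * δ ≤ d) (hp : 0 < p) (hpq : p ≤ q) :
    d1 (xpm d δ p q 1) (xpm d δ p q (-1))
        = 4 * q * Real.sqrt (((d / 2 - δ : ℕ) : ℝ) ^ 2 * q ^ 2
            + 2 * ((d / 2 - δ : ℕ) : ℝ) * (δ : ℝ) * p ^ 2) ∧
    (d : ℝ) * q ^ 2 ≤ d1 (xpm d δ p q 1) (xpm d δ p q (-1)) := by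

  have hq : 0 < q := lt_of_lt_of_le hp hpq
  have hdd : d / 2 * 2 = d := Nat.div_mul_cancel hd.two_dvd
  set η : ℕ := d / 2 - δ with hηdef
  have hηpos : 0 < η := by omega
  set A : Fin d → ℝ := fun i => if (i:ℕ) < η then q else if (i:ℕ) < d/2 then p
      else if (i:ℕ) < d - δ then 0 else p with hA
  set B : Fin d → ℝ := fun i => if (i:ℕ) < d/2 then 0
      else if (i:ℕ) < d - δ then q else 0 with hB
  set s : ℝ := (η:ℝ) * q^2 + 2*(δ:ℝ)*p^2 with hs
  set t : ℝ := (η:ℝ) * q^2 with ht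
  have hspos : 0 < s := by
    have : (0:ℝ) < (η:ℝ) := by exact_mod_cast hηpos
    have : (0:ℝ) < (δ:ℝ) := by exact_mod_cast hδ
    positivity
  have htpos : 0 < t := by
    have : (0:ℝ) < (η:ℝ) := by exact_mod_cast hηpos
    positivity
  have hxp : ∀ i : Fin d, xpm d δ p q 1 i = ((A i + B i : ℝ) : ℂ) := by
    intro i
    simp only [xpm, hA, hB, hηdef]
    split_ifs <;> push_cast <;> first | ring1 | omega
  have hxm : ∀ i : Fin d, xpm d δ p q (-1) i = ((A i - B i : ℝ) : ℂ) := by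
    intro i
    simp only [xpm, hA, hB, hηdef]
    split_ifs <;> push_cast <;> first | ring1 | omega
  set M : Matrix (Fin d) (Fin d) ℂ := outerDiff (xpm d δ p q 1) (xpm d δ p q (-1)) with hMdef
  have hMab : ∀ i j : Fin d, M i j = ((2*(A i * B j + B i * A j) : ℝ) : ℂ) := by
    intro i j
    simp only [hMdef, outerDiff, Matrix.of_apply, hxp, hxm, Complex.star_def,
      Complex.conj_ofReal]
    push_cast
    ring
  have SAB : ∑ i : Fin d, A i * B i = 0 := by
    have h := sum_piecewise η (d/2) (d-δ) (by omega) (by omega) (by omega)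
      0 0 0 0 (fun i => A i * B i) (by
        intro i
        simp only [hA, hB]
        split_ifs <;> first | ring1 | omega)
    simpa using h
  have SAA : ∑ i : Fin d, A i * A i = s := by
    have h := sum_piecewise η (d/2) (d-δ) (by omega) (by omega) (by omega)
      (q*q) (p*p) 0 (p*p) (fun i => A i * A i) (by
        intro i
        simp only [hA]
        split_ifs <;> first | ring1 | omega)
    rw [h, hs, (by omega : d/2 - η = δ), (by omega : d - (d - δ) = δ)]
    ring
  have SBB : ∑ i : Fin d, B i * B i = t := by
    have h := sum_piecewise η (d/2) (d-δ) (by omega) (by omega) (by omega)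
      0 0 (q*q) 0 (fun i => B i * B i) (by
        intro i
        simp only [hB]
        split_ifs <;> first | ring1 | omega)
    rw [h, ht, (by omega : d - δ - d/2 = η)]
    ring
  have hM2 : ∀ i j : Fin d, (M * M) i j = ((4*(t*(A i*A j) + s*(B i*B j)) : ℝ) : ℂ) := by
    intro i j
    rw [Matrix.mul_apply]
    have step1 : ∀ k : Fin d, M i k * M k j
        = ((4*(A i * B k + B i * A k)*(A k * B j + B k * A j) : ℝ) : ℂ) := by
      intro k
      rw [hMab i k, hMab k j]
      push_cast
      ring
    rw [Finset.sum_congr rfl (fun k _ => step1 k), ← Complex.ofReal_sum]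
    congr 1
    have step2 : ∀ k : Fin d, 4*(A i * B k + B i * A k)*(A k * B j + B k * A j)
        = (4*A i*B j + 4*B i*A j)*(A k * B k) + (4*A i*A j)*(B k * B k)
          + (4*B i*B j)*(A k * A k) := fun k => by ring
    rw [Finset.sum_congr rfl (fun k _ => step2 k)]
    simp only [Finset.sum_add_distrib, ← Finset.mul_sum]
    rw [SAB, SAA, SBB]
    ring
  have hM3 : M * M * M = ((4*s*t : ℝ) : ℂ) • M := by
    ext i j
    rw [Matrix.mul_apply]
    have step1 : ∀ k : Fin d, (M * M) i k * M k j
        = ((4*(t*(A i*A k) + s*(B i*B k)) * (2*(A k * B j + B k * A j)) : ℝ) : ℂ) := by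
      intro k
      rw [hM2 i k, hMab k j]
      push_cast
      ring
    rw [Finset.sum_congr rfl (fun k _ => step1 k), ← Complex.ofReal_sum]
    have step2 : ∀ k : Fin d, 4*(t*(A i*A k) + s*(B i*B k)) * (2*(A k * B j + B k * A j))
        = (8*t*A i*A j + 8*s*B i*B j)*(A k * B k) + (8*t*A i*B j)*(A k * A k)
          + (8*s*B i*A j)*(B k * B k) := fun k => by ring
    rw [Finset.sum_congr rfl (fun k _ => step2 k)]
    simp only [Finset.sum_add_distrib, ← Finset.mul_sum]
    rw [SAB, SAA, SBB, Matrix.smul_apply, hMab i j, smul_eq_mul]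
    push_cast
    ring
  have htr : (M * M).trace = ((8*s*t : ℝ) : ℂ) := by
    rw [Matrix.trace]
    simp only [Matrix.diag_apply]
    rw [Finset.sum_congr rfl (fun i _ => hM2 i i), ← Complex.ofReal_sum]
    congr 1
    have step2 : ∀ i : Fin d, 4*(t*(A i*A i) + s*(B i*B i))
        = (4*t)*(A i * A i) + (4*s)*(B i * B i) := fun i => by ring
    rw [Finset.sum_congr rfl (fun i _ => step2 i)]
    simp only [Finset.sum_add_distrib, ← Finset.mul_sum]
    rw [SAA, SBB]
    ring
  have hHerm : M.IsHermitian := outerDiff_isHermitian _ _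
  set lam : ℝ := 2 * Real.sqrt (s*t) with hlamdef
  have hlam : 0 < lam := by
    have : 0 < Real.sqrt (s*t) := Real.sqrt_pos.mpr (by positivity)
    positivity
  have hlam2 : lam ^ 2 = 4 * (s*t) := by
    rw [hlamdef, mul_pow, Real.sq_sqrt (by positivity)]
    ring
  have hcube : ∀ i, hHerm.eigenvalues i ^ 3 = lam ^ 2 * hHerm.eigenvalues i := by
    intro i
    rw [hlam2, (by ring : 4 * (s*t) = 4*s*t)]
    exact eig_cube hHerm (4*s*t) hM3 i
  have hsq : ∑ i, hHerm.eigenvalues i ^ 2 = 2 * lam ^ 2 := by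
    have h1 : ((∑ i, hHerm.eigenvalues i ^ 2 : ℝ) : ℂ) = ((8*s*t : ℝ) : ℂ) := by
      push_cast
      rw [← trace_sq_eq hHerm, htr]
      push_cast
      ring
    have h2 : (∑ i, hHerm.eigenvalues i ^ 2 : ℝ) = 8*s*t := by exact_mod_cast h1
    rw [h2, hlam2]
    ring
  have hmain : ∑ i, |hHerm.eigenvalues i| = 2 * lam := sum_abs_of_cube _ lam hlam hcube hsq
  have hd1 : d1 (xpm d δ p q 1) (xpm d δ p q (-1)) = 2 * lam := by
    rw [d1]
    exact hmain
  have hX : s * t = q^2 * ((η:ℝ)^2 * q^2 + 2*(η:ℝ)*(δ:ℝ)*p^2) := by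
    rw [hs, ht]
    ring
  have hsqrt : Real.sqrt (s*t) = q * Real.sqrt ((η:ℝ)^2 * q^2 + 2*(η:ℝ)*(δ:ℝ)*p^2) := by
    rw [hX, Real.sqrt_mul (sq_nonneg q), Real.sqrt_sq hq.le]
  have heq : d1 (xpm d δ p q 1) (xpm d δ p q (-1))
      = 4 * q * Real.sqrt ((η:ℝ)^2 * q^2 + 2*(η:ℝ)*(δ:ℝ)*p^2) := by
    rw [hd1, hlamdef, hsqrt]
    ring
  constructor
  · exact heq
  · rw [heq]
    have h4η : (d:ℝ) ≤ 4*(η:ℝ) := by exact_mod_cast (by omega : d ≤ 4*η)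
    have hle : (η:ℝ)*q ≤ Real.sqrt ((η:ℝ)^2 * q^2 + 2*(η:ℝ)*(δ:ℝ)*p^2) := by
      have h0 : (η:ℝ)*q = Real.sqrt (((η:ℝ)*q)^2) := (Real.sqrt_sq (by positivity)).symm
      rw [h0]
      apply Real.sqrt_le_sqrt
      have hδ0 : (0:ℝ) ≤ (δ:ℝ) := Nat.cast_nonneg δ
      have hη0 : (0:ℝ) ≤ (η:ℝ) := Nat.cast_nonneg η
      nlinarith [mul_nonneg (mul_nonneg hη0 hδ0) (sq_nonneg p)]
    have hη0' : (0:ℝ) ≤ (η:ℝ) := Nat.cast_nonneg η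
    nlinarith [mul_le_mul_of_nonneg_left hle (by positivity : (0:ℝ) ≤ 4*q),
      mul_le_mul_of_nonneg_right h4η (sq_nonneg q)]
end
end
end

section
/- Let d be an even positive integer, δ ≤ d/4 a positive integer, 0 < p ≤ q, η := d/2 − δ, and let M ∈ ℝ^{d×d} be the 4×4 block matrix with row/column block sizes (η, δ, η, δ) given by M = [[0, 0, q𝟙_{η×η}, 0], [0, 0, p𝟙_{δ×η}, 0], [q𝟙_{η×η}, p𝟙_{η×δ}, 0, p𝟙_{η×δ}], [0, 0, p𝟙_{δ×η}, 0]], where 𝟙_{m×n} denotes the m×n all-ones matrix and 0 denotes all-zero blocks of the appropriate sizes. Then MᵀM has rank at most two, the vectors (0_{1×η}, 0_{1×δ}, 𝟙_{1×η}, 0_{1×δ})ᵀ and (q𝟙_{1×η}, p𝟙_{1×δ}, 0_{1×η}, p𝟙_{1×δ})ᵀ are linearly independent eigenvectors of MᵀM with eigenvalue η(ηq² + 2δp²), and consequently M has exactly two nonzero singular values, both equal to √(η²q² + 2ηδp²). -/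
open Matrix

noncomputable section

open Finset

lemma sum_piece (d δ : ℕ) (hd : Even d) (hδd : 4 * δ ≤ d) (f : ℕ → ℝ) (c₁ c₂ c₃ c₄ : ℝ)
    (h₁ : ∀ i, i < d / 2 - δ → f i = c₁)
    (h₂ : ∀ i, d / 2 - δ ≤ i → i < d / 2 → f i = c₂)
    (h₃ : ∀ i, d / 2 ≤ i → i < d - δ → f i = c₃)
    (h₄ : ∀ i, d - δ ≤ i → i < d → f i = c₄) :
    ∑ i : Fin d, f i
      = ((d / 2 - δ : ℕ) : ℝ) * c₁ + (δ : ℝ) * c₂ + ((d / 2 - δ : ℕ) : ℝ) * c₃ + (δ : ℝ) * c₄ := by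
  obtain ⟨k, hk⟩ := hd
  have hk2 : d / 2 = k := by omega
  rw [Fin.sum_univ_eq_sum_range, Finset.range_eq_Ico,
    ← Finset.sum_Ico_consecutive _ (Nat.zero_le (d - δ)) (by omega : d - δ ≤ d),
    ← Finset.sum_Ico_consecutive _ (Nat.zero_le (d / 2)) (by omega : d / 2 ≤ d - δ),
    ← Finset.sum_Ico_consecutive _ (Nat.zero_le (d / 2 - δ)) (by omega : d / 2 - δ ≤ d / 2)]
  have e1 : ∑ i ∈ Finset.Ico 0 (d / 2 - δ), f i = ((d / 2 - δ : ℕ) : ℝ) * c₁ := by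
    rw [Finset.sum_congr rfl fun i hi => h₁ i (Finset.mem_Ico.mp hi).2, Finset.sum_const,
      Nat.card_Ico, Nat.sub_zero, nsmul_eq_mul]
  have e2 : ∑ i ∈ Finset.Ico (d / 2 - δ) (d / 2), f i = (δ : ℝ) * c₂ := by
    rw [Finset.sum_congr rfl fun i hi =>
        h₂ i (Finset.mem_Ico.mp hi).1 (Finset.mem_Ico.mp hi).2, Finset.sum_const,
      Nat.card_Ico, show d / 2 - (d / 2 - δ) = δ by omega, nsmul_eq_mul]
  have e3 : ∑ i ∈ Finset.Ico (d / 2) (d - δ), f i = ((d / 2 - δ : ℕ) : ℝ) * c₃ := by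
    rw [Finset.sum_congr rfl fun i hi =>
        h₃ i (Finset.mem_Ico.mp hi).1 (Finset.mem_Ico.mp hi).2, Finset.sum_const,
      Nat.card_Ico, show d - δ - d / 2 = d / 2 - δ by omega, nsmul_eq_mul]
  have e4 : ∑ i ∈ Finset.Ico (d - δ) d, f i = (δ : ℝ) * c₄ := by
    rw [Finset.sum_congr rfl fun i hi =>
        h₄ i (Finset.mem_Ico.mp hi).1 (Finset.mem_Ico.mp hi).2, Finset.sum_const,
      Nat.card_Ico, show d - (d - δ) = δ by omega, nsmul_eq_mul]
  rw [e1, e2, e3, e4]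


/-- The block matrix `M` with row/column block sizes `(η, δ, η, δ)`, `η = d/2 - δ`:
`M = [[0,0,q𝟙,0],[0,0,p𝟙,0],[q𝟙,p𝟙,0,p𝟙],[0,0,p𝟙,0]]`.
(0-based index `i` lies in block 1 iff `i < η`, block 2 iff `η ≤ i < d/2`,
block 3 iff `d/2 ≤ i < d - δ`, block 4 iff `d - δ ≤ i`.) -/
def Mmat (d δ : ℕ) (p q : ℝ) : Matrix (Fin d) (Fin d) ℝ :=
  Matrix.of fun i j =>
    if (i : ℕ) < d / 2 - δ then
      (if d / 2 ≤ (j : ℕ) ∧ (j : ℕ) < d - δ then q else 0)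
    else if (i : ℕ) < d / 2 then
      (if d / 2 ≤ (j : ℕ) ∧ (j : ℕ) < d - δ then p else 0)
    else if (i : ℕ) < d - δ then
      (if (j : ℕ) < d / 2 - δ then q
        else if (j : ℕ) < d / 2 then p
        else if d - δ ≤ (j : ℕ) then p else 0)
    else
      (if d / 2 ≤ (j : ℕ) ∧ (j : ℕ) < d - δ then p else 0)

/-- The vector `(0_{1×η}, 0_{1×δ}, 𝟙_{1×η}, 0_{1×δ})ᵀ`. -/
def v₁ (d δ : ℕ) : Fin d → ℝ :=
  fun i => if d / 2 ≤ (i : ℕ) ∧ (i : ℕ) < d - δ then 1 else 0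

/-- The vector `(q𝟙_{1×η}, p𝟙_{1×δ}, 0_{1×η}, p𝟙_{1×δ})ᵀ`. -/
def v₂ (d δ : ℕ) (p q : ℝ) : Fin d → ℝ :=
  fun i => if (i : ℕ) < d / 2 - δ then q
    else if (i : ℕ) < d / 2 then p
    else if (i : ℕ) < d - δ then 0
    else p

def gent (d δ : ℕ) (p q : ℝ) (n : ℕ) (j : Fin d) : ℝ :=
  if n < d / 2 - δ then (if d / 2 ≤ (j : ℕ) ∧ (j : ℕ) < d - δ then q else 0)
  else if n < d / 2 then (if d / 2 ≤ (j : ℕ) ∧ (j : ℕ) < d - δ then p else 0)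
  else if n < d - δ then
    (if (j : ℕ) < d / 2 - δ then q else if (j : ℕ) < d / 2 then p
      else if d - δ ≤ (j : ℕ) then p else 0)
  else (if d / 2 ≤ (j : ℕ) ∧ (j : ℕ) < d - δ then p else 0)

lemma Mmat_eq_gent (d δ : ℕ) (p q : ℝ) (i j : Fin d) :
    Mmat d δ p q i j = gent d δ p q (i : ℕ) j := rfl

lemma r1_eq (d δ : ℕ) (p q : ℝ) (j : Fin d) :
    (if d / 2 ≤ (j : ℕ) ∧ (j : ℕ) < d - δ then q else 0) = q * v₁ d δ j := by
  simp only [v₁]; split_ifs <;> ring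

lemma r3_eq (d δ : ℕ) (p q : ℝ) (j : Fin d) :
    (if (j : ℕ) < d / 2 - δ then q else if (j : ℕ) < d / 2 then p
      else if d - δ ≤ (j : ℕ) then p else 0) = v₂ d δ p q j := by
  simp only [v₂]; split_ifs <;> first | rfl | omega

lemma entry (d δ : ℕ) (p q : ℝ) (hd : Even d) (hδd : 4 * δ ≤ d) (j k : Fin d) :
    ((Mmat d δ p q)ᵀ * Mmat d δ p q) j k
      = (((d / 2 - δ : ℕ) : ℝ) * q ^ 2 + 2 * (δ : ℝ) * p ^ 2) * (v₁ d δ j * v₁ d δ k)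
        + ((d / 2 - δ : ℕ) : ℝ) * (v₂ d δ p q j * v₂ d δ p q k) := by
  rw [Matrix.mul_apply]
  simp only [Matrix.transpose_apply, Mmat_eq_gent]
  rw [sum_piece d δ hd hδd (fun n => gent d δ p q n j * gent d δ p q n k)
      ((q * v₁ d δ j) * (q * v₁ d δ k)) ((p * v₁ d δ j) * (p * v₁ d δ k))
      (v₂ d δ p q j * v₂ d δ p q k) ((p * v₁ d δ j) * (p * v₁ d δ k))
      (fun i hi => by
        simp only [gent, if_pos hi]
        rw [r1_eq d δ p q j, r1_eq d δ p q k])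
      (fun i h1 h2 => by
        simp only [gent, if_neg (by omega : ¬ i < d / 2 - δ), if_pos h2]
        rw [show (if d / 2 ≤ (j : ℕ) ∧ (j : ℕ) < d - δ then p else 0) = p * v₁ d δ j by
            simp only [v₁]; split_ifs <;> ring,
          show (if d / 2 ≤ (k : ℕ) ∧ (k : ℕ) < d - δ then p else 0) = p * v₁ d δ k by
            simp only [v₁]; split_ifs <;> ring])
      (fun i h1 h2 => by
        simp only [gent, if_neg (by omega : ¬ i < d / 2 - δ), if_neg (by omega : ¬ i < d / 2),
          if_pos h2]
        rw [r3_eq d δ p q j, r3_eq d δ p q k])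
      (fun i h1 h2 => by
        simp only [gent, if_neg (by omega : ¬ i < d / 2 - δ),
          if_neg (by omega : ¬ i < d / 2), if_neg (by omega : ¬ i < d - δ)]
        rw [show (if d / 2 ≤ (j : ℕ) ∧ (j : ℕ) < d - δ then p else 0) = p * v₁ d δ j by
            simp only [v₁]; split_ifs <;> ring,
          show (if d / 2 ≤ (k : ℕ) ∧ (k : ℕ) < d - δ then p else 0) = p * v₁ d δ k by
            simp only [v₁]; split_ifs <;> ring])]
  ring

section Sums
variable (d δ : ℕ) (p q : ℝ)

lemma S11 (hd : Even d) (hδd : 4 * δ ≤ d) : ∑ k : Fin d, v₁ d δ k * v₁ d δ k = ((d / 2 - δ : ℕ) : ℝ) := by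
  exact (sum_piece d δ hd hδd
    (fun n => (if d / 2 ≤ n ∧ n < d - δ then (1:ℝ) else 0)
      * (if d / 2 ≤ n ∧ n < d - δ then (1:ℝ) else 0)) 0 0 1 0
    (fun i h1 => by beta_reduce; rw [if_neg (by omega : ¬(d / 2 ≤ i ∧ i < d - δ)), zero_mul])
    (fun i h1 h2 => by beta_reduce; rw [if_neg (by omega : ¬(d / 2 ≤ i ∧ i < d - δ)), zero_mul])
    (fun i h1 h2 => by beta_reduce; rw [if_pos ⟨h1, h2⟩, one_mul])
    (fun i h1 h2 => by beta_reduce; rw [if_neg (by omega : ¬(d / 2 ≤ i ∧ i < d - δ)), zero_mul])).trans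
    (by ring)

lemma S21 (hd : Even d) (hδd : 4 * δ ≤ d) : ∑ k : Fin d, v₂ d δ p q k * v₁ d δ k = 0 := by
  exact (sum_piece d δ hd hδd
    (fun n => (if n < d / 2 - δ then q else if n < d / 2 then p
        else if n < d - δ then 0 else p)
      * (if d / 2 ≤ n ∧ n < d - δ then (1:ℝ) else 0)) 0 0 0 0
    (fun i h1 => by beta_reduce; rw [if_neg (by omega : ¬(d / 2 ≤ i ∧ i < d - δ)), mul_zero])
    (fun i h1 h2 => by beta_reduce; rw [if_neg (by omega : ¬(d / 2 ≤ i ∧ i < d - δ)), mul_zero])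
    (fun i h1 h2 => by
      beta_reduce
      rw [if_neg (by omega : ¬ i < d / 2 - δ), if_neg (by omega : ¬ i < d / 2),
        if_pos h2, zero_mul])
    (fun i h1 h2 => by beta_reduce; rw [if_neg (by omega : ¬(d / 2 ≤ i ∧ i < d - δ)), mul_zero])).trans
    (by ring)

lemma S12 (hd : Even d) (hδd : 4 * δ ≤ d) : ∑ k : Fin d, v₁ d δ k * v₂ d δ p q k = 0 := by
  have h := S21 d δ p q hd hδd
  rw [← h]
  exact Finset.sum_congr rfl fun k _ => mul_comm _ _

lemma S22 (hd : Even d) (hδd : 4 * δ ≤ d) : ∑ k : Fin d, v₂ d δ p q k * v₂ d δ p q k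
    = ((d / 2 - δ : ℕ) : ℝ) * q ^ 2 + 2 * (δ : ℝ) * p ^ 2 := by
  exact (sum_piece d δ hd hδd
    (fun n => (if n < d / 2 - δ then q else if n < d / 2 then p
        else if n < d - δ then 0 else p)
      * (if n < d / 2 - δ then q else if n < d / 2 then p
        else if n < d - δ then 0 else p)) (q * q) (p * p) 0 (p * p)
    (fun i h1 => by beta_reduce; rw [if_pos h1])
    (fun i h1 h2 => by beta_reduce; rw [if_neg (by omega : ¬ i < d / 2 - δ), if_pos h2])
    (fun i h1 h2 => by
      beta_reduce
      rw [if_neg (by omega : ¬ i < d / 2 - δ), if_neg (by omega : ¬ i < d / 2),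
        if_pos h2, zero_mul])
    (fun i h1 h2 => by
      beta_reduce
      rw [if_neg (by omega : ¬ i < d / 2 - δ), if_neg (by omega : ¬ i < d / 2),
        if_neg (by omega : ¬ i < d - δ)])).trans (by ring)

lemma mulVec_formula (hd : Even d) (hδd : 4 * δ ≤ d) (x : Fin d → ℝ) :
    ((Mmat d δ p q)ᵀ * Mmat d δ p q) *ᵥ x
      = ((((d / 2 - δ : ℕ) : ℝ) * q ^ 2 + 2 * (δ : ℝ) * p ^ 2)
            * ∑ k : Fin d, v₁ d δ k * x k) • v₁ d δ
        + (((d / 2 - δ : ℕ) : ℝ) * ∑ k : Fin d, v₂ d δ p q k * x k) • v₂ d δ p q := by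
  funext j
  simp only [Matrix.mulVec, dotProduct, Pi.add_apply, Pi.smul_apply, smul_eq_mul]
  have key : ∀ k, ((Mmat d δ p q)ᵀ * Mmat d δ p q) j k * x k
      = ((((d / 2 - δ : ℕ) : ℝ) * q ^ 2 + 2 * (δ : ℝ) * p ^ 2) * v₁ d δ j)
          * (v₁ d δ k * x k)
        + (((d / 2 - δ : ℕ) : ℝ) * v₂ d δ p q j) * (v₂ d δ p q k * x k) := fun k => by
    rw [entry d δ p q hd hδd j k]; ring
  rw [Finset.sum_congr rfl fun k _ => key k, Finset.sum_add_distrib,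
    ← Finset.mul_sum, ← Finset.mul_sum]
  ring

lemma eig_v1 (hd : Even d) (hδd : 4 * δ ≤ d) :
    ((Mmat d δ p q)ᵀ * Mmat d δ p q) *ᵥ v₁ d δ
      = (((d / 2 - δ : ℕ) : ℝ) * (((d / 2 - δ : ℕ) : ℝ) * q ^ 2 + 2 * (δ : ℝ) * p ^ 2))
          • v₁ d δ := by
  rw [mulVec_formula d δ p q hd hδd, S11 d δ hd hδd, S21 d δ p q hd hδd]
  rw [mul_zero, zero_smul, add_zero, mul_comm]

lemma eig_v2 (hd : Even d) (hδd : 4 * δ ≤ d) :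
    ((Mmat d δ p q)ᵀ * Mmat d δ p q) *ᵥ v₂ d δ p q
      = (((d / 2 - δ : ℕ) : ℝ) * (((d / 2 - δ : ℕ) : ℝ) * q ^ 2 + 2 * (δ : ℝ) * p ^ 2))
          • v₂ d δ p q := by
  rw [mulVec_formula d δ p q hd hδd, S12 d δ p q hd hδd, S22 d δ p q hd hδd]
  rw [mul_zero, zero_smul, zero_add]

lemma sq_eq (hd : Even d) (hδd : 4 * δ ≤ d) (x : Fin d → ℝ) :
    ((Mmat d δ p q)ᵀ * Mmat d δ p q) *ᵥ (((Mmat d δ p q)ᵀ * Mmat d δ p q) *ᵥ x)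
      = (((d / 2 - δ : ℕ) : ℝ) * (((d / 2 - δ : ℕ) : ℝ) * q ^ 2 + 2 * (δ : ℝ) * p ^ 2))
          • (((Mmat d δ p q)ᵀ * Mmat d δ p q) *ᵥ x) := by
  conv_lhs => rw [mulVec_formula d δ p q hd hδd x]
  conv_rhs => rw [mulVec_formula d δ p q hd hδd x]
  rw [Matrix.mulVec_add, Matrix.mulVec_smul, Matrix.mulVec_smul,
    eig_v1 d δ p q hd hδd, eig_v2 d δ p q hd hδd, smul_add, smul_smul, smul_smul,
    smul_smul, smul_smul]
  rw [mul_comm]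
  congr 1
  rw [mul_comm]

lemma trace_eq (hd : Even d) (hδd : 4 * δ ≤ d) :
    ((Mmat d δ p q)ᵀ * Mmat d δ p q).trace
      = 2 * (((d / 2 - δ : ℕ) : ℝ) * (((d / 2 - δ : ℕ) : ℝ) * q ^ 2 + 2 * (δ : ℝ) * p ^ 2)) := by
  rw [Matrix.trace]
  have key : ∀ j : Fin d, ((Mmat d δ p q)ᵀ * Mmat d δ p q).diag j
      = (((d / 2 - δ : ℕ) : ℝ) * q ^ 2 + 2 * (δ : ℝ) * p ^ 2) * (v₁ d δ j * v₁ d δ j)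
        + ((d / 2 - δ : ℕ) : ℝ) * (v₂ d δ p q j * v₂ d δ p q j) := fun j =>
    entry d δ p q hd hδd j j
  rw [Finset.sum_congr rfl fun j _ => key j, Finset.sum_add_distrib,
    ← Finset.mul_sum, ← Finset.mul_sum, S11 d δ hd hδd, S22 d δ p q hd hδd]
  ring

end Sums

lemma rank_le_two (d δ : ℕ) (p q : ℝ) (hd : Even d) (hδd : 4 * δ ≤ d) :
    ((Mmat d δ p q)ᵀ * Mmat d δ p q).rank ≤ 2 := by
  classical
  have hle : LinearMap.range (Matrix.mulVecLin ((Mmat d δ p q)ᵀ * Mmat d δ p q))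
      ≤ Submodule.span ℝ {v₁ d δ, v₂ d δ p q} := by
    rintro y ⟨x, rfl⟩
    rw [Matrix.mulVecLin_apply, mulVec_formula d δ p q hd hδd]
    exact Submodule.add_mem _
      (Submodule.smul_mem _ _ (Submodule.subset_span (Set.mem_insert _ _)))
      (Submodule.smul_mem _ _ (Submodule.subset_span (Set.mem_insert_of_mem _ rfl)))
  have h1 : ((Mmat d δ p q)ᵀ * Mmat d δ p q).rank
      ≤ Module.finrank ℝ (Submodule.span ℝ {v₁ d δ, v₂ d δ p q}) :=
    Submodule.finrank_mono hle
  have h2 : Module.finrank ℝ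
      (Submodule.span ℝ ({v₁ d δ, v₂ d δ p q} : Set (Fin d → ℝ))) ≤ 2 := by
    refine le_trans (finrank_span_le_card _) ?_
    rw [Set.toFinset_insert, Set.toFinset_singleton]
    exact le_trans (Finset.card_insert_le _ _) (by simp)
  exact le_trans h1 h2

lemma lin_indep (d δ : ℕ) (p q : ℝ) (hd0 : 0 < d) (hd : Even d) (hδ : 0 < δ)
    (hδd : 4 * δ ≤ d) (hp : 0 < p) (hpq : p ≤ q) :
    LinearIndependent ℝ ![v₁ d δ, v₂ d δ p q] := by
  obtain ⟨k, hk⟩ := hd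
  have hk2 : d / 2 = k := by omega
  have hq : 0 < q := lt_of_lt_of_le hp hpq
  rw [LinearIndependent.pair_iff]
  intro s t hst
  have hmid : (d / 2 : ℕ) < d := by omega
  have hv1a : v₁ d δ ⟨d / 2, hmid⟩ = 1 := by
    simp only [v₁]; rw [if_pos ⟨le_refl _, by omega⟩]
  have hv2a : v₂ d δ p q ⟨d / 2, hmid⟩ = 0 := by
    simp only [v₂]; rw [if_neg (by omega), if_neg (by omega), if_pos (by omega)]
  have hv1b : v₁ d δ ⟨0, hd0⟩ = 0 := by
    simp only [v₁]; rw [if_neg (by omega)]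
  have hv2b : v₂ d δ p q ⟨0, hd0⟩ = q := by
    simp only [v₂]; rw [if_pos (by omega)]
  have e1 := congrFun hst ⟨d / 2, hmid⟩
  have e2 := congrFun hst ⟨0, hd0⟩
  simp only [Pi.add_apply, Pi.smul_apply, Pi.zero_apply, smul_eq_mul, hv1a, hv2a,
    hv1b, hv2b, mul_one, mul_zero, add_zero, zero_add] at e1 e2
  refine ⟨e1, ?_⟩
  rcases mul_eq_zero.mp e2 with h | h
  · exact h
  · exact absurd h (ne_of_gt hq)

lemma trace_eq_sum_eigs (d δ : ℕ) (p q : ℝ)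
    (h : ((Mmat d δ p q)ᵀ * Mmat d δ p q).IsHermitian) :
    ∑ i, h.eigenvalues i = ((Mmat d δ p q)ᵀ * Mmat d δ p q).trace := by
  rw [h.trace_eq_sum_eigenvalues]
  simp


/-- `MᵀM` has rank at most two, `v₁` and `v₂` are linearly independent
eigenvectors of `MᵀM` with eigenvalue `η(ηq² + 2δp²)`, and `M` has exactly two nonzero
singular values, both equal to `√(η²q² + 2ηδp²)`. -/
theorem Mmat_singular_values (d δ : ℕ) (p q : ℝ) (hd0 : 0 < d) (hd : Even d)
    (hδ : 0 < δ) (hδd : 4 * δ ≤ d) (hp : 0 < p) (hpq : p ≤ q) :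
    ((Mmat d δ p q)ᵀ * Mmat d δ p q).rank ≤ 2 ∧
    ((Mmat d δ p q)ᵀ * Mmat d δ p q) *ᵥ v₁ d δ
        = (((d / 2 - δ : ℕ) : ℝ) * (((d / 2 - δ : ℕ) : ℝ) * q ^ 2 + 2 * (δ : ℝ) * p ^ 2))
            • v₁ d δ ∧
    ((Mmat d δ p q)ᵀ * Mmat d δ p q) *ᵥ v₂ d δ p q
        = (((d / 2 - δ : ℕ) : ℝ) * (((d / 2 - δ : ℕ) : ℝ) * q ^ 2 + 2 * (δ : ℝ) * p ^ 2))
            • v₂ d δ p q ∧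
    LinearIndependent ℝ ![v₁ d δ, v₂ d δ p q] ∧
    ∀ h : ((Mmat d δ p q)ᵀ * Mmat d δ p q).IsHermitian,
      ∃ i j : Fin d, i ≠ j ∧
        h.eigenvalues i
          = ((d / 2 - δ : ℕ) : ℝ) * (((d / 2 - δ : ℕ) : ℝ) * q ^ 2 + 2 * (δ : ℝ) * p ^ 2) ∧
        h.eigenvalues j
          = ((d / 2 - δ : ℕ) : ℝ) * (((d / 2 - δ : ℕ) : ℝ) * q ^ 2 + 2 * (δ : ℝ) * p ^ 2) ∧
        (∀ k, k ≠ i → k ≠ j → h.eigenvalues k = 0) ∧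
        Real.sqrt (h.eigenvalues i)
          = Real.sqrt (((d / 2 - δ : ℕ) : ℝ) ^ 2 * q ^ 2
              + 2 * ((d / 2 - δ : ℕ) : ℝ) * (δ : ℝ) * p ^ 2) ∧
        Real.sqrt (h.eigenvalues j)
          = Real.sqrt (((d / 2 - δ : ℕ) : ℝ) ^ 2 * q ^ 2
              + 2 * ((d / 2 - δ : ℕ) : ℝ) * (δ : ℝ) * p ^ 2) := by
  classical
  have hq : 0 < q := lt_of_lt_of_le hp hpq
  have hη : 0 < d / 2 - δ := by
    obtain ⟨k, hk⟩ := hd; omega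
  set lam : ℝ :=
    ((d / 2 - δ : ℕ) : ℝ) * (((d / 2 - δ : ℕ) : ℝ) * q ^ 2 + 2 * (δ : ℝ) * p ^ 2) with hlam
  have hlampos : 0 < lam := by
    apply mul_pos
    · exact_mod_cast hη
    · have h1 : 0 < ((d / 2 - δ : ℕ) : ℝ) := by exact_mod_cast hη
      positivity
  refine ⟨rank_le_two d δ p q hd hδd, eig_v1 d δ p q hd hδd, eig_v2 d δ p q hd hδd,
    lin_indep d δ p q hd0 hd hδ hδd hp hpq, ?_⟩
  intro h
  set μ := h.eigenvalues with hμ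
  have hdi : ∀ i, μ i = 0 ∨ μ i = lam := by
    intro i
    have hv := h.mulVec_eigenvectorBasis i
    have hnz : ⇑(h.eigenvectorBasis i) ≠ 0 := mt (WithLp.ofLp_eq_zero (p := 2)).mp (h.eigenvectorBasis.orthonormal.ne_zero i)
    have h2 := sq_eq d δ p q hd hδd (⇑(h.eigenvectorBasis i))
    rw [hv, Matrix.mulVec_smul, hv, smul_smul, smul_smul] at h2
    have h3 : (μ i * μ i - lam * μ i) • ⇑(h.eigenvectorBasis i) = 0 := by
      rw [sub_smul, h2, sub_self]
    rcases smul_eq_zero.mp h3 with h4 | h4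
    · rcases mul_eq_zero.mp (show μ i * (μ i - lam) = 0 by linarith [h4]) with h5 | h5
      · exact Or.inl h5
      · exact Or.inr (by linarith [h5])
    · exact absurd h4 hnz
  have hsum2 : ∑ i, μ i = 2 * lam :=
    (trace_eq_sum_eigs d δ p q h).trans (trace_eq d δ p q hd hδd)
  set S := Finset.univ.filter (fun i => μ i = lam) with hS
  have hcard : (S.card : ℝ) * lam = 2 * lam := by
    calc (S.card : ℝ) * lam = ∑ i ∈ S, μ i := by
          rw [Finset.sum_congr rfl (fun i hi => (Finset.mem_filter.mp hi).2),
            Finset.sum_const, nsmul_eq_mul]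
      _ = ∑ i, μ i := by
          rw [← Finset.sum_filter_add_sum_filter_not Finset.univ (fun i => μ i = lam) μ]
          have hz : ∑ i ∈ Finset.univ.filter (fun i => ¬ μ i = lam), μ i = 0 :=
            Finset.sum_eq_zero fun i hi => (hdi i).resolve_right (Finset.mem_filter.mp hi).2
          rw [hz, add_zero]
      _ = 2 * lam := hsum2
  have hc2 : S.card = 2 := by
    have hc := mul_right_cancel₀ (ne_of_gt hlampos) hcard
    exact_mod_cast hc
  obtain ⟨i, j, hij, hSij⟩ := Finset.card_eq_two.mp hc2
  have hiS : i ∈ S := by rw [hSij]; exact Finset.mem_insert_self i {j}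
  have hjS : j ∈ S := by rw [hSij]; simp
  have hi : μ i = lam := (Finset.mem_filter.mp hiS).2
  have hj : μ j = lam := (Finset.mem_filter.mp hjS).2
  refine ⟨i, j, hij, hi, hj, ?_, ?_, ?_⟩
  · intro k hki hkj
    have hkS : k ∉ S := by rw [hSij]; simp [hki, hkj]
    exact (hdi k).resolve_right fun hk =>
      hkS (Finset.mem_filter.mpr ⟨Finset.mem_univ k, hk⟩)
  · rw [hi]; congr 1; rw [hlam]; ring
  · rw [hj]; congr 1; rw [hlam]; ring
end
end

section
/- There is a universal constant C > 0 with the following property. Let d be an even positive integer, δ ≤ d/4 a positive integer, a and L positive integers with d = aL and 1 ≤ a < δ, m_1,…,m_K ∈ ℂ^d masks whose nonzero entries all lie in positions {1,…,δ}, and 0 < p ≤ q. Then ‖Z(x⁺) − Z(x⁻)‖₂² ≤ C·K·p²·‖m‖_∞²·δ³/a, where ‖m‖_∞ := max_{1≤k≤K} ‖m_k‖_∞. -/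
open scoped BigOperators

noncomputable section

section AuxZ

lemma innerC_congr' {d : ℕ} (u x y : Fin d → ℂ) (h : ∀ n, u n ≠ 0 → x n = y n) :
    innerC u x = innerC u y := by
  unfold innerC
  refine Finset.sum_congr rfl fun n _ => ?_
  by_cases h0 : u n = 0
  · simp [h0]
  · rw [h n h0]

lemma innerC_neg' {d : ℕ} (u x y : Fin d → ℂ) (h : ∀ n, u n ≠ 0 → x n = -(y n)) :
    innerC u x = -innerC u y := by
  unfold innerC
  rw [← Finset.sum_neg_distrib]
  refine Finset.sum_congr rfl fun n _ => ?_
  by_cases h0 : u n = 0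
  · simp [h0]
  · rw [h n h0]; simp [mul_neg]

lemma innerC_add' {d : ℕ} (u x y : Fin d → ℂ) :
    innerC u x + innerC u y = innerC u (fun n => x n + y n) := by
  unfold innerC
  rw [← Finset.sum_add_distrib]
  refine Finset.sum_congr rfl fun n _ => ?_
  rw [map_add, mul_add]

lemma innerC_abs_le' {d : ℕ} (u x : Fin d → ℂ) :
    ‖innerC u x‖ ≤ ∑ n, ‖u n‖ * ‖x n‖ := by
  refine (norm_sum_le _ _).trans (le_of_eq ?_)
  refine Finset.sum_congr rfl fun n _ => ?_
  rw [norm_mul, Complex.norm_conj]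

lemma abs_abs_sub_abs_le_abs_add' (z w : ℂ) :
    |‖z‖ - ‖w‖| ≤ ‖z + w‖ := by
  have h := abs_norm_sub_norm_le z (-w)
  simpa [sub_neg_eq_add] using h

lemma addmod_cases' (d n w : ℕ) (hn : n < d) (hw : w < d) :
    ((n + w) % d = n + w ∧ n + w < d) ∨ ((n + w) % d = n + w - d ∧ d ≤ n + w) := by
  rcases Nat.lt_or_ge (n + w) d with h | h
  · exact Or.inl ⟨Nat.mod_eq_of_lt h, h⟩
  · refine Or.inr ⟨?_, h⟩
    rw [Nat.mod_eq_sub_mod h, Nat.mod_eq_of_lt (by omega)]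

lemma card_support_le' (d δ c : ℕ) :
    (Finset.univ.filter fun n : Fin d => ((n : ℕ) + c) % d < δ).card ≤ δ := by
  classical
  have h := Finset.card_le_card_of_injOn (f := fun n : Fin d => ((n : ℕ) + c) % d)
    (s := Finset.univ.filter fun n : Fin d => ((n : ℕ) + c) % d < δ)
    (t := Finset.range δ) ?_ ?_
  · simpa using h
  · intro n hn
    simp only [Finset.mem_coe, Finset.mem_filter] at hn
    simpa using hn.2
  · intro n hn n' hn' h
    have hmodeq : (n : ℕ) % d = (n' : ℕ) % d := Nat.ModEq.add_right_cancel' c h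
    exact Fin.ext (by rwa [Nat.mod_eq_of_lt n.isLt, Nat.mod_eq_of_lt n'.isLt] at hmodeq)

lemma card_multiples' (a x w : ℕ) (ha : 0 < a) (S : Finset ℕ)
    (hS : ∀ n ∈ S, a ∣ n ∧ x < n ∧ n < x + w) : S.card ≤ w / a + 1 := by
  have h1 : S.card ≤ (Finset.Ioc (x / a) ((x + w) / a)).card := by
    apply Finset.card_le_card_of_injOn (fun n => n / a)
    · intro n hn
      obtain ⟨hdvd, hx, hw'⟩ := hS n hn
      simp only [Finset.mem_coe, Finset.mem_Ioc]
      constructor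
      · by_contra hle
        push_neg at hle
        have he : a * (n / a) = n := Nat.mul_div_cancel' hdvd
        have h2 : a * (n / a) ≤ a * (x / a) := Nat.mul_le_mul_left a hle
        have h3 : a * (x / a) ≤ x := by
          rw [mul_comm]; exact Nat.div_mul_le_self x a
        omega
      · exact Nat.div_le_div_right (le_of_lt hw')
    · intro n hn n' hn' h
      obtain ⟨hd1, -, -⟩ := hS n hn
      obtain ⟨hd2, -, -⟩ := hS n' hn'
      have h' : n / a = n' / a := h
      rw [← Nat.mul_div_cancel' hd1, ← Nat.mul_div_cancel' hd2, h']
  have h2 : (Finset.Ioc (x / a) ((x + w) / a)).card = (x + w) / a - x / a :=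
    Nat.card_Ioc _ _
  have h4 : (x + w) / a ≤ x / a + w / a + 1 := by
    have h3 : (x + w) / a = x / a + w / a + if a ≤ x % a + w % a then 1 else 0 :=
      Nat.add_div ha
    rw [h3]
    split
    · exact le_refl _
    · simpa using Nat.le_succ (x / a + w / a)
  rw [h2] at h1
  have h5 : (x + w) / a - x / a ≤ w / a + 1 := by
    have h6 := Nat.sub_le_sub_right h4 (x / a)
    calc (x + w) / a - x / a ≤ x / a + w / a + 1 - x / a := h6
    _ = w / a + 1 := by
      rw [Nat.add_assoc, Nat.add_sub_cancel_left]
  exact h1.trans h5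

end AuxZ

/-- `‖Z(x⁺) - Z(x⁻)‖₂² ≤ C K p² ‖m‖_∞² δ³ / a`. -/
theorem Z_diff_bound : ∃ C : ℝ, 0 < C ∧
    ∀ (d δ a L K : ℕ) (m : Fin K → Fin d → ℂ) (p q : ℝ),
      0 < d → Even d → 0 < δ → 4 * δ ≤ d → 0 < a → 0 < L → d = a * L → 1 ≤ a → a < δ →
      (∀ k n, m k n ≠ 0 → (n : ℕ) < δ) →
      0 < p → p ≤ q →
      ‖Zmap L m a (xpm d δ p q 1) - Zmap L m a (xpm d δ p q (-1))‖ ^ 2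
        ≤ C * (K : ℝ) * p ^ 2 * maskSup m ^ 2 * (δ : ℝ) ^ 3 / (a : ℝ) := by
  classical
  refine ⟨64, by norm_num, ?_⟩
  intro d δ a L K m p q hd hdeven hδ hδd ha hL hdal ha1 haδ hm hp hpq
  rcases Nat.eq_zero_or_pos K with hK | hK
  · subst hK
    have h0 : ‖Zmap L m a (xpm d δ p q 1) - Zmap L m a (xpm d δ p q (-1))‖ = 0 := by
      rw [EuclideanSpace.norm_eq]
      simp
    rw [h0]
    simp
  have hde : d % 2 = 0 := Nat.even_iff.mp hdeven
  set M := maskSup m with hMdef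
  set xp := xpm d δ p q 1 with hxp
  set xm := xpm d δ p q (-1) with hxm
  have hM : ∀ (k : Fin K) (n : Fin d), ‖m k n‖ ≤ M := by
    intro k n
    have h1 : ‖m k n‖ ≤ ⨆ n', ‖m k n'‖ :=
      le_ciSup (f := fun n' => ‖m k n'‖)
        (Set.Finite.bddAbove (Set.finite_range _)) n
    have h2 : (⨆ n', ‖m k n'‖) ≤ M := by
      have hne : Nonempty (Fin K) := ⟨k⟩
      exact le_ciSup (f := fun k' => ⨆ n', ‖m k' n'‖)
        (Set.Finite.bddAbove (Set.finite_range _)) k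
    exact h1.trans h2
  have hM0 : 0 ≤ M := le_trans (norm_nonneg _) (hM ⟨0, hK⟩ ⟨0, hd⟩)
  have h2pM : (0:ℝ) ≤ 2 * p * M :=
    mul_nonneg (mul_nonneg (by norm_num) hp.le) hM0
  -- the key per-entry bound
  have key : ∀ (k : Fin K) (ℓ : Fin L),
      (Zmap L m a xp (k, ℓ) - Zmap L m a xm (k, ℓ)) ^ 2
        ≤ if (δ < (((ℓ : ℕ) + 1) * a) % d ∧ (((ℓ : ℕ) + 1) * a) % d < 2 * δ)
            ∨ (d / 2 < (((ℓ : ℕ) + 1) * a) % d ∧ (((ℓ : ℕ) + 1) * a) % d < d / 2 + δ)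
          then (2 * p * M * (δ : ℝ)) ^ 2 else 0 := by
    intro k ℓ
    set c : ℕ := ((ℓ : ℕ) + 1) * a with hc
    set u : Fin d → ℂ := shift (c : ℤ) (m k) with hudef
    have hZp : Zmap L m a xp (k, ℓ) = ‖innerC u xp‖ := rfl
    have hZm : Zmap L m a xm (k, ℓ) = ‖innerC u xm‖ := rfl
    have hu : ∀ n : Fin d, u n = m k ⟨((n : ℕ) + c) % d, Nat.mod_lt _ hd⟩ := by
      intro n
      have hfin : intToFin d n.pos ((n : ℤ) + (c : ℕ))
          = ⟨((n : ℕ) + c) % d, Nat.mod_lt _ hd⟩ := by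
        unfold intToFin
        apply Fin.ext
        show (((n : ℤ) + (c : ℤ)) % (d : ℤ)).toNat = ((n : ℕ) + c) % d
        rw [show ((n : ℤ) + (c : ℤ)) = (((n : ℕ) + c : ℕ) : ℤ) by push_cast; ring]
        rw [← Int.natCast_mod]; exact Int.toNat_natCast _
      show m k (intToFin d n.pos ((n : ℤ) + (c : ℕ))) = _
      rw [hfin]
    have hsupp : ∀ n : Fin d, u n ≠ 0 → ((n : ℕ) + c) % d < δ := by
      intro n hn
      rw [hu n] at hn
      exact hm k _ hn
    have hct : c % d < d := Nat.mod_lt _ hd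
    have hmodc : ∀ n : Fin d, ((n : ℕ) + c) % d = ((n : ℕ) + c % d) % d := by
      intro n
      conv_lhs => rw [Nat.add_mod]
      rw [Nat.mod_eq_of_lt n.isLt]
    by_cases hbad : (δ < c % d ∧ c % d < 2 * δ) ∨ (d / 2 < c % d ∧ c % d < d / 2 + δ)
    · rw [if_pos hbad]
      have hsupp2 : ∀ n : Fin d, u n ≠ 0 → ¬((n : ℕ) < d / 2 - δ) := by
        intro n hn
        have hr := hsupp n hn
        rw [hmodc n] at hr
        have hnd := n.isLt
        rcases addmod_cases' d (n : ℕ) (c % d) n.isLt hct with ⟨h1, h2⟩ | ⟨h1, h2⟩ <;>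
          rw [h1] at hr <;> omega
      have hterm : ∀ n : Fin d,
          ‖u n‖ * ‖xp n + xm n‖
            ≤ if ((n : ℕ) + c) % d < δ then 2 * p * M else 0 := by
        intro n
        by_cases hn0 : u n = 0
        · rw [hn0, norm_zero, zero_mul]
          split_ifs
          · exact h2pM
          · exact le_refl 0
        · rw [if_pos (hsupp n hn0)]
          have hux : ‖u n‖ ≤ M := by rw [hu n]; exact hM k _
          have hge := hsupp2 n hn0
          have hpp : ‖((p:ℝ):ℂ) + ((p:ℝ):ℂ)‖ ≤ 2 * p := by
            rw [show ((p:ℝ):ℂ) + ((p:ℝ):ℂ) = ((2*p : ℝ) : ℂ) by push_cast; ring,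
              Complex.norm_real, Real.norm_eq_abs, abs_of_nonneg (by linarith)]
          have hxx : ‖xp n + xm n‖ ≤ 2 * p := by
            rw [hxp, hxm]
            unfold xpm
            rw [if_neg hge, if_neg hge]
            by_cases h2 : (n : ℕ) < d / 2
            · rw [if_pos h2, if_pos h2]
              exact hpp
            · rw [if_neg h2, if_neg h2]
              by_cases h3 : (n : ℕ) < d - δ
              · rw [if_pos h3, if_pos h3,
                  show (((1:ℝ)*q : ℝ):ℂ) + (((-1:ℝ)*q : ℝ):ℂ) = 0 by push_cast; ring,
                  norm_zero]
                linarith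
              · rw [if_neg h3, if_neg h3]
                exact hpp
          calc ‖u n‖ * ‖xp n + xm n‖ ≤ M * (2 * p) :=
                mul_le_mul hux hxx (norm_nonneg _) hM0
          _ = 2 * p * M := by ring
      have hblock : |‖innerC u xp‖ - ‖innerC u xm‖|
          ≤ 2 * p * M * (δ:ℝ) := by
        calc |‖innerC u xp‖ - ‖innerC u xm‖|
            ≤ ‖innerC u xp + innerC u xm‖ := abs_abs_sub_abs_le_abs_add' _ _
        _ = ‖innerC u (fun n => xp n + xm n)‖ := by rw [innerC_add']
        _ ≤ ∑ n, ‖u n‖ * ‖xp n + xm n‖ := innerC_abs_le' _ _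
        _ ≤ ∑ n : Fin d, if ((n : ℕ) + c) % d < δ then 2 * p * M else 0 :=
            Finset.sum_le_sum fun n _ => hterm n
        _ = ((Finset.univ.filter fun n : Fin d => ((n : ℕ) + c) % d < δ).card : ℝ)
              * (2 * p * M) := by
            rw [Finset.sum_ite, Finset.sum_const, Finset.sum_const_zero, add_zero,
              nsmul_eq_mul]
        _ ≤ (δ : ℝ) * (2 * p * M) := by
            apply mul_le_mul_of_nonneg_right _ h2pM
            exact_mod_cast card_support_le' d δ c
        _ = 2 * p * M * (δ:ℝ) := by ring
      rw [hZp, hZm]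
      calc (‖innerC u xp‖ - ‖innerC u xm‖) ^ 2
          = |‖innerC u xp‖ - ‖innerC u xm‖| ^ 2 := (sq_abs _).symm
      _ ≤ (2 * p * M * (δ:ℝ)) ^ 2 := pow_le_pow_left₀ (abs_nonneg _) hblock 2
    · rw [if_neg hbad]
      push_neg at hbad
      have hgood : c % d ≤ δ ∨ (2 * δ ≤ c % d ∧ c % d ≤ d / 2) ∨ d / 2 + δ ≤ c % d := by
        omega
      have heq : ‖innerC u xp‖ = ‖innerC u xm‖ := by
        rcases hgood with hg | hg | hg
        · have heqi : innerC u xp = innerC u xm := by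
            apply innerC_congr'
            intro n hn
            have hr := hsupp n hn
            rw [hmodc n] at hr
            have hnd := n.isLt
            have hpos : (n:ℕ) < d / 2 ∨ d - δ ≤ (n:ℕ) := by
              rcases addmod_cases' d (n:ℕ) (c % d) n.isLt hct with ⟨h1, h2⟩ | ⟨h1, h2⟩ <;>
                rw [h1] at hr <;> omega
            rw [hxp, hxm]
            unfold xpm
            split_ifs with h1 h2 h3 <;> first | rfl | omega
          rw [heqi]
        · have heqi : innerC u xp = -innerC u xm := by
            apply innerC_neg'
            intro n hn
            have hr := hsupp n hn
            rw [hmodc n] at hr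
            have hnd := n.isLt
            have hpos : d / 2 ≤ (n:ℕ) ∧ (n:ℕ) < d - δ := by
              rcases addmod_cases' d (n:ℕ) (c % d) n.isLt hct with ⟨h1, h2⟩ | ⟨h1, h2⟩ <;>
                rw [h1] at hr <;> omega
            rw [hxp, hxm]
            unfold xpm
            split_ifs with h1 h2 h3
            · omega
            · omega
            · push_cast; ring
            · omega
          rw [heqi, norm_neg]
        · have heqi : innerC u xp = innerC u xm := by
            apply innerC_congr'
            intro n hn
            have hr := hsupp n hn
            rw [hmodc n] at hr
            have hnd := n.isLt
            have hpos : (n:ℕ) < d / 2 ∨ d - δ ≤ (n:ℕ) := by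
              rcases addmod_cases' d (n:ℕ) (c % d) n.isLt hct with ⟨h1, h2⟩ | ⟨h1, h2⟩ <;>
                rw [h1] at hr <;> omega
            rw [hxp, hxm]
            unfold xpm
            split_ifs with h1 h2 h3 <;> first | rfl | omega
          rw [heqi]
      rw [hZp, hZm, heq]
      simp
  -- expand the norm
  have hnorm : ‖Zmap L m a xp - Zmap L m a xm‖ ^ 2
      = ∑ kl : Fin K × Fin L, (Zmap L m a xp kl - Zmap L m a xm kl) ^ 2 := by
    rw [EuclideanSpace.norm_eq, Real.sq_sqrt (Finset.sum_nonneg fun _ _ => sq_nonneg _)]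
    refine Finset.sum_congr rfl fun kl _ => ?_
    rw [Real.norm_eq_abs, sq_abs]
    rfl
  set Bd := Finset.univ.filter (fun ℓ : Fin L =>
      (δ < (((ℓ : ℕ) + 1) * a) % d ∧ (((ℓ : ℕ) + 1) * a) % d < 2 * δ)
      ∨ (d / 2 < (((ℓ : ℕ) + 1) * a) % d ∧ (((ℓ : ℕ) + 1) * a) % d < d / 2 + δ)) with hBd
  have hsum : ∑ kl : Fin K × Fin L, (Zmap L m a xp kl - Zmap L m a xm kl) ^ 2
      ≤ (K : ℝ) * ((Bd.card : ℝ) * (2 * p * M * (δ:ℝ)) ^ 2) := by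
    calc ∑ kl : Fin K × Fin L, (Zmap L m a xp kl - Zmap L m a xm kl) ^ 2
        ≤ ∑ kl : Fin K × Fin L,
            (if (δ < (((kl.2 : ℕ) + 1) * a) % d ∧ (((kl.2 : ℕ) + 1) * a) % d < 2 * δ)
              ∨ (d / 2 < (((kl.2 : ℕ) + 1) * a) % d
                  ∧ (((kl.2 : ℕ) + 1) * a) % d < d / 2 + δ)
              then (2 * p * M * (δ : ℝ)) ^ 2 else 0) :=
          Finset.sum_le_sum fun kl _ => key kl.1 kl.2
    _ = ∑ _k : Fin K, ∑ ℓ : Fin L,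
          (if (δ < (((ℓ : ℕ) + 1) * a) % d ∧ (((ℓ : ℕ) + 1) * a) % d < 2 * δ)
            ∨ (d / 2 < (((ℓ : ℕ) + 1) * a) % d ∧ (((ℓ : ℕ) + 1) * a) % d < d / 2 + δ)
            then (2 * p * M * (δ : ℝ)) ^ 2 else 0) := by rw [Fintype.sum_prod_type]
    _ = ∑ _k : Fin K, ((Bd.card : ℝ) * (2 * p * M * (δ:ℝ)) ^ 2) := by
        refine Finset.sum_congr rfl fun k _ => ?_
        rw [Finset.sum_ite, Finset.sum_const, Finset.sum_const_zero, add_zero,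
          nsmul_eq_mul]
    _ = (K : ℝ) * ((Bd.card : ℝ) * (2 * p * M * (δ:ℝ)) ^ 2) := by
        rw [Finset.sum_const, Finset.card_univ, Fintype.card_fin, nsmul_eq_mul]
  -- count the bad shifts
  have hinj : Function.Injective (fun ℓ : Fin L => ((ℓ : ℕ) + 1) * a) := by
    intro x y h
    simp only at h
    have hxy := Nat.eq_of_mul_eq_mul_right ha h
    exact Fin.ext (by omega)
  have hfact : ∀ ℓ : Fin L, ((ℓ : ℕ) + 1) * a ≤ d := by
    intro ℓ
    have h1 : (ℓ : ℕ) + 1 ≤ L := ℓ.isLt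
    calc ((ℓ:ℕ)+1) * a ≤ L * a := Nat.mul_le_mul_right a h1
    _ = d := by rw [hdal, Nat.mul_comm]
  have hcard1 : ∀ (x : ℕ), (Finset.univ.filter fun ℓ : Fin L =>
      x < (((ℓ : ℕ) + 1) * a) % d ∧ (((ℓ : ℕ) + 1) * a) % d < x + δ).card ≤ δ / a + 1 := by
    intro x
    rw [← Finset.card_image_of_injective _ hinj]
    apply card_multiples' a x δ ha
    intro n hn
    simp only [Finset.mem_image, Finset.mem_filter, Finset.mem_univ, true_and] at hn
    obtain ⟨ℓ, ⟨hl1, hl2⟩, rfl⟩ := hn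
    have hle := hfact ℓ
    have hdisj : (((ℓ:ℕ)+1)*a) % d = ((ℓ:ℕ)+1)*a
        ∨ (((ℓ:ℕ)+1)*a = d ∧ (((ℓ:ℕ)+1)*a) % d = 0) := by
      rcases eq_or_lt_of_le hle with he | hlt
      · exact Or.inr ⟨he, by rw [he, Nat.mod_self]⟩
      · exact Or.inl (Nat.mod_eq_of_lt hlt)
    exact ⟨⟨(ℓ:ℕ)+1, mul_comm _ _⟩, by omega, by omega⟩
  have hBdcard : Bd.card ≤ 4 * (δ / a) := by
    have hsub : Bd ⊆ (Finset.univ.filter fun ℓ : Fin L =>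
        δ < (((ℓ : ℕ) + 1) * a) % d ∧ (((ℓ : ℕ) + 1) * a) % d < δ + δ)
        ∪ (Finset.univ.filter fun ℓ : Fin L =>
        d / 2 < (((ℓ : ℕ) + 1) * a) % d ∧ (((ℓ : ℕ) + 1) * a) % d < d / 2 + δ) := by
      intro ℓ hl
      simp only [hBd, Finset.mem_filter, Finset.mem_union, Finset.mem_univ, true_and] at hl ⊢
      omega
    have h1 := hcard1 δ
    have h2 := hcard1 (d / 2)
    have h3 : 1 ≤ δ / a := (Nat.one_le_div_iff ha).mpr (le_of_lt haδ)
    have h4 := (Finset.card_le_card hsub).trans (Finset.card_union_le _ _)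
    omega
  have hcardR : (Bd.card : ℝ) ≤ 4 * ((δ:ℝ) / (a:ℝ)) := by
    calc (Bd.card : ℝ) ≤ ((4 * (δ / a) : ℕ) : ℝ) := by exact_mod_cast hBdcard
    _ = 4 * (((δ / a : ℕ)) : ℝ) := by push_cast; ring
    _ ≤ 4 * ((δ:ℝ) / (a:ℝ)) := by
        have h5 := Nat.cast_div_le (α := ℝ) (m := δ) (n := a)
        linarith
  have ha0 : (0:ℝ) < a := by exact_mod_cast ha
  calc ‖Zmap L m a xp - Zmap L m a xm‖ ^ 2
      = ∑ kl : Fin K × Fin L, (Zmap L m a xp kl - Zmap L m a xm kl) ^ 2 := hnorm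
  _ ≤ (K : ℝ) * ((Bd.card : ℝ) * (2 * p * M * (δ:ℝ)) ^ 2) := hsum
  _ ≤ (K : ℝ) * ((4 * ((δ:ℝ) / (a:ℝ))) * (2 * p * M * (δ:ℝ)) ^ 2) := by
      apply mul_le_mul_of_nonneg_left _ (Nat.cast_nonneg K)
      exact mul_le_mul_of_nonneg_right hcardR (sq_nonneg _)
  _ ≤ 64 * (K : ℝ) * p ^ 2 * M ^ 2 * (δ : ℝ) ^ 3 / (a : ℝ) := by
      have heq2 : (K:ℝ) * ((4 * ((δ:ℝ)/(a:ℝ))) * (2*p*M*(δ:ℝ))^2)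
          = 16 * ((K:ℝ) * p^2 * M^2 * (δ:ℝ)^3 / (a:ℝ)) := by
        field_simp
        ring
      have heq3 : 64 * (K:ℝ) * p^2 * M^2 * (δ:ℝ)^3 / (a:ℝ)
          = 64 * ((K:ℝ) * p^2 * M^2 * (δ:ℝ)^3 / (a:ℝ)) := by ring
      have hX : 0 ≤ (K:ℝ) * p^2 * M^2 * (δ:ℝ)^3 / (a:ℝ) := by positivity
      rw [heq2, heq3]
      linarith
end
end

section
/- There is a universal constant C > 0 with the following property. Let d be an even positive integer, δ ≤ d/4 a positive integer, a and L positive integers with d = aL and 1 ≤ a < δ, m_1,…,m_K ∈ ℂ^d masks whose nonzero entries all lie in positions {1,…,δ}, and 0 < p ≤ q. Then ‖Y(x⁺) − Y(x⁻)‖₂² ≤ C·K·‖m‖_∞⁴·q²·p²·δ⁵/a, where ‖m‖_∞ := max_{1≤k≤K} ‖m_k‖_∞. -/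
open scoped BigOperators

noncomputable section

lemma intToFin_natCast (d : ℕ) (hd : 0 < d) (n : ℕ) :
    intToFin d hd (n : ℤ) = ⟨n % d, Nat.mod_lt n hd⟩ := by
  apply Fin.ext
  simp only [intToFin]
  omega

lemma innerC_shift {d : ℕ} (hd : 0 < d) (u x : Fin d → ℂ) (s : ℕ) :
    innerC (shift (s : ℤ) u) x
      = ∑ n : Fin d, u ⟨((n : ℕ) + s) % d, Nat.mod_lt _ hd⟩ * (starRingEnd ℂ) (x n) := by
  unfold innerC shift
  refine Finset.sum_congr rfl fun n _ => ?_
  congr 1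

lemma window_eq {d : ℕ} (s t n j : ℕ) (hst : s + t = d) (hn : n < d)
    (hj : (n + s) % d = j) : n = (j + t) % d := by
  have h1 : (j + t) % d = (n + s + t) % d := by rw [← hj, Nat.mod_add_mod]
  have h2 : n + s + t = n + d := by omega
  rw [h1, h2, Nat.add_mod_right, Nat.mod_eq_of_lt hn]

lemma card_support_le {d δ s : ℕ} (P : Fin d → Prop) [DecidablePred P]
    (h : ∀ n : Fin d, P n → ((n : ℕ) + s) % d < δ) :
    (Finset.univ.filter P).card ≤ δ := by
  have hle := Finset.card_le_card_of_injOn (s := Finset.univ.filter P)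
    (f := fun n : Fin d => ((n : ℕ) + s) % d)
    (t := Finset.range δ)
    (fun n hn => Finset.mem_range.mpr (h n (Finset.mem_filter.mp hn).2))
    (fun n1 _ n2 _ heq => by
      have : (n1 : ℕ) % d = (n2 : ℕ) % d := Nat.ModEq.add_right_cancel' s heq
      exact Fin.ext (by rwa [Nat.mod_eq_of_lt n1.isLt, Nat.mod_eq_of_lt n2.isLt] at this))
  simpa using hle


lemma abs_sum_le {d : ℕ} (c w : Fin d → ℂ) (M B : ℝ) (δ : ℕ) (hM : 0 ≤ M) (hB : 0 ≤ B)
    (hc : ∀ n, ‖c n‖ ≤ M) (hw : ∀ n, c n ≠ 0 → ‖w n‖ ≤ B)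
    (hcard : (Finset.univ.filter (fun n => c n ≠ 0)).card ≤ δ) :
    ‖∑ n, c n * (starRingEnd ℂ) (w n)‖ ≤ (δ : ℝ) * M * B := by
  calc ‖∑ n, c n * (starRingEnd ℂ) (w n)‖
      ≤ ∑ n, ‖c n * (starRingEnd ℂ) (w n)‖ := norm_sum_le _ _
    _ ≤ ∑ n : Fin d, (if c n ≠ 0 then M * B else 0) := by
        refine Finset.sum_le_sum fun n _ => ?_
        by_cases h : c n = 0
        · simp [h]
        · rw [if_pos h, norm_mul]
          have : ‖(starRingEnd ℂ) (w n)‖ = ‖w n‖ := by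
            simp
          rw [this]
          exact mul_le_mul (hc n) (hw n h) (norm_nonneg _) hM
    _ = ((Finset.univ.filter (fun n => c n ≠ 0)).card : ℝ) * (M * B) := by
        rw [Finset.sum_ite, Finset.sum_const, Finset.sum_const]
        simp [nsmul_eq_mul]
    _ ≤ (δ : ℝ) * (M * B) := by
        apply mul_le_mul_of_nonneg_right _ (by positivity)
        exact_mod_cast hcard
    _ = (δ : ℝ) * M * B := by ring

lemma sq_abs_sub_le (A B : ℂ) :
    |‖A‖ ^ 2 - ‖B‖ ^ 2|
      ≤ (‖A‖ + ‖B‖) * ‖A + B‖ := by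
  have h1 : |‖A‖ - ‖B‖| ≤ ‖A + B‖ := by
    have := abs_norm_sub_norm_le A (-B)
    simpa [sub_neg_eq_add] using this
  have h2 : ‖A‖ ^ 2 - ‖B‖ ^ 2
      = (‖A‖ - ‖B‖) * (‖A‖ + ‖B‖) := by ring
  rw [h2, abs_mul, abs_of_nonneg (by positivity : (0:ℝ) ≤ ‖A‖ + ‖B‖),
    mul_comm]
  exact mul_le_mul_of_nonneg_left h1 (by positivity)

lemma xpm_eq {d δ : ℕ} (p q : ℝ) (hδd : 4 * δ ≤ d) (hd2 : d % 2 = 0) (n : Fin d)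
    (h : (n : ℕ) < d / 2 ∨ d - δ ≤ (n : ℕ)) :
    xpm d δ p q 1 n = xpm d δ p q (-1) n := by
  unfold xpm
  split_ifs <;> first | rfl | omega

lemma xpm_neg {d δ : ℕ} (p q : ℝ) (hδd : 4 * δ ≤ d) (hd2 : d % 2 = 0) (n : Fin d)
    (h1 : d / 2 ≤ (n : ℕ)) (h2 : (n : ℕ) < d - δ) :
    xpm d δ p q 1 n = -xpm d δ p q (-1) n := by
  unfold xpm
  split_ifs <;> first | omega | (push_cast; ring)

lemma xpm_abs_le {d δ : ℕ} {p q ε : ℝ} (hp : 0 < p) (hpq : p ≤ q)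
    (hε : ε = 1 ∨ ε = -1) (n : Fin d) :
    ‖xpm d δ p q ε n‖ ≤ q := by
  have hq : 0 ≤ q := le_trans hp.le hpq
  unfold xpm
  split_ifs
  · simp [Complex.norm_real, Real.norm_eq_abs, abs_of_nonneg hq]
  · simpa [Complex.norm_real, Real.norm_eq_abs, abs_of_nonneg hp.le] using hpq
  · rcases hε with h | h <;> simp [h, Complex.norm_real, Real.norm_eq_abs, abs_of_nonneg hq]
  · simpa [Complex.norm_real, Real.norm_eq_abs, abs_of_nonneg hp.le] using hpq

lemma xpm_add_abs_le {d δ : ℕ} {p q : ℝ} (hp : 0 < p) (hpq : p ≤ q)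
    (hδd : 4 * δ ≤ d) (hd2 : d % 2 = 0) (n : Fin d) (h : d / 2 - δ ≤ (n : ℕ)) :
    ‖xpm d δ p q 1 n + xpm d δ p q (-1) n‖ ≤ 2 * p := by
  unfold xpm
  split_ifs
  · omega
  · have : ((p : ℂ) + (p : ℂ)) = ((2 * p : ℝ) : ℂ) := by push_cast; ring
    rw [this, Complex.norm_real, Real.norm_eq_abs, abs_of_nonneg (by positivity)]
  · have : (((1 * q : ℝ) : ℂ) + ((-1 * q : ℝ) : ℂ)) = 0 := by push_cast; ring
    rw [this]
    simp
    positivity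
  · have : ((p : ℂ) + (p : ℂ)) = ((2 * p : ℝ) : ℂ) := by push_cast; ring
    rw [this, Complex.norm_real, Real.norm_eq_abs, abs_of_nonneg (by positivity)]

lemma div_add_le (u δ a : ℕ) (ha : 0 < a) : (u + δ) / a ≤ u / a + δ / a + 1 := by
  have hx : u < a * (u / a) + a := by
    conv_lhs => rw [← Nat.div_add_mod u a]
    exact Nat.add_lt_add_left (Nat.mod_lt _ ha) _
  have hy : δ < a * (δ / a) + a := by
    conv_lhs => rw [← Nat.div_add_mod δ a]
    exact Nat.add_lt_add_left (Nat.mod_lt _ ha) _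
  have hlt : u + δ < (u / a + δ / a + 2) * a := by
    have he : (u / a + δ / a + 2) * a = a * (u / a) + a * (δ / a) + 2 * a := by ring
    rw [he]
    generalize a * (u / a) = X at hx ⊢
    generalize a * (δ / a) = Y at hy ⊢
    omega
  have := (Nat.div_lt_iff_lt_mul ha).mpr hlt
  omega

lemma count_le (L a δ u v : ℕ) (ha : 0 < a) (haδ : a ≤ δ) (hv : v ≤ u + δ) :
    (Finset.univ.filter
      (fun ℓ : Fin L => u < (L - 1 - (ℓ : ℕ)) * a ∧ (L - 1 - (ℓ : ℕ)) * a < v)).card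
      ≤ 2 * (δ / a) := by
  have hle := Finset.card_le_card_of_injOn
    (s := Finset.univ.filter
      (fun ℓ : Fin L => u < (L - 1 - (ℓ : ℕ)) * a ∧ (L - 1 - (ℓ : ℕ)) * a < v))
    (f := fun ℓ : Fin L => L - 1 - (ℓ : ℕ))
    (t := Finset.Ioc (u / a) ((u + δ) / a))
    (fun ℓ hℓ => by
      have hm := (Finset.mem_filter.mp hℓ).2
      refine Finset.mem_Ioc.mpr ⟨?_, ?_⟩
      · exact (Nat.div_lt_iff_lt_mul ha).mpr hm.1
      · exact (Nat.le_div_iff_mul_le ha).mpr (le_trans (Nat.le_of_lt hm.2) hv))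
    (fun ℓ1 _ ℓ2 _ heq => by
      have heq' : L - 1 - (ℓ1 : ℕ) = L - 1 - (ℓ2 : ℕ) := heq
      have h1 := ℓ1.isLt
      have h2 := ℓ2.isLt
      exact Fin.ext (by omega))
  have hcard : (Finset.Ioc (u / a) ((u + δ) / a)).card = (u + δ) / a - u / a := by
    simp [Nat.card_Ioc]
  have hdiv := div_add_le u δ a ha
  have h1 : 1 ≤ δ / a := Nat.one_le_div_iff ha |>.mpr haδ
  omega

lemma entry_bound {d δ s t : ℕ} {p q M : ℝ} (hp : 0 < p) (hpq : p ≤ q) (hM0 : 0 ≤ M)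
    (hδ : 0 < δ) (hδd : 4 * δ ≤ d) (hd2 : d % 2 = 0) (hd : 0 < d)
    (u : Fin d → ℂ) (hu : ∀ n, u n ≠ 0 → (n : ℕ) < δ)
    (huM : ∀ n, ‖u n‖ ≤ M)
    (hst : s + t = d) (htd : t < d) :
    (‖∑ n : Fin d, u ⟨((n : ℕ) + s) % d, Nat.mod_lt _ hd⟩ *
        (starRingEnd ℂ) (xpm d δ p q 1 n)‖ ^ 2
      - ‖∑ n : Fin d, u ⟨((n : ℕ) + s) % d, Nat.mod_lt _ hd⟩ *
        (starRingEnd ℂ) (xpm d δ p q (-1) n)‖ ^ 2) ^ 2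
      ≤ if (d / 2 - δ < t ∧ t < d / 2) ∨ (d - 2 * δ < t ∧ t < d - δ)
        then (4 * (δ : ℝ) ^ 2 * M ^ 2 * p * q) ^ 2 else 0 := by
  have hq : 0 < q := lt_of_lt_of_le hp hpq
  set c : Fin d → ℂ := fun n => u ⟨((n : ℕ) + s) % d, Nat.mod_lt _ hd⟩ with hc
  set A := ∑ n : Fin d, c n * (starRingEnd ℂ) (xpm d δ p q 1 n) with hA
  set B := ∑ n : Fin d, c n * (starRingEnd ℂ) (xpm d δ p q (-1) n) with hB
  have hsupp : ∀ n : Fin d, c n ≠ 0 → ((n : ℕ) + s) % d < δ := fun n h => hu _ h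
  have hwin : ∀ n : Fin d, c n ≠ 0 → (n : ℕ) = (((n : ℕ) + s) % d + t) % d :=
    fun n _ => window_eq s t _ _ hst n.isLt rfl
  have hcard : (Finset.univ.filter fun n => c n ≠ 0).card ≤ δ := card_support_le _ hsupp
  have hcM : ∀ n, ‖c n‖ ≤ M := fun n => huM _
  have hAle : ‖A‖ ≤ (δ : ℝ) * M * q :=
    abs_sum_le c _ M q δ hM0 hq.le hcM (fun n _ => xpm_abs_le hp hpq (Or.inl rfl) n) hcard
  have hBle : ‖B‖ ≤ (δ : ℝ) * M * q :=
    abs_sum_le c _ M q δ hM0 hq.le hcM (fun n _ => xpm_abs_le hp hpq (Or.inr rfl) n) hcard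
  by_cases hstr : (d / 2 - δ < t ∧ t < d / 2) ∨ (d - 2 * δ < t ∧ t < d - δ)
  · rw [if_pos hstr]
    have hreg : ∀ n : Fin d, c n ≠ 0 → d / 2 - δ ≤ (n : ℕ) := by
      intro n h
      have hj := hsupp n h
      have hw := hwin n h
      have hjt : ((n : ℕ) + s) % d + t < d := by omega
      rw [Nat.mod_eq_of_lt hjt] at hw
      omega
    have hAB : ‖A + B‖ ≤ (δ : ℝ) * M * (2 * p) := by
      have hABsum : A + B = ∑ n : Fin d,
          c n * (starRingEnd ℂ) (xpm d δ p q 1 n + xpm d δ p q (-1) n) := by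
        rw [hA, hB, ← Finset.sum_add_distrib]
        exact Finset.sum_congr rfl fun n _ => by rw [map_add, mul_add]
      rw [hABsum]
      exact abs_sum_le c _ M (2 * p) δ hM0 (by positivity) hcM
        (fun n h => xpm_add_abs_le hp hpq hδd hd2 n (hreg n h)) hcard
    have hE : |‖A‖ ^ 2 - ‖B‖ ^ 2| ≤ 4 * (δ : ℝ) ^ 2 * M ^ 2 * p * q := by
      refine le_trans (sq_abs_sub_le A B) ?_
      have h1 : ‖A‖ + ‖B‖ ≤ 2 * ((δ : ℝ) * M * q) := by linarith
      calc (‖A‖ + ‖B‖) * ‖A + B‖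
          ≤ (2 * ((δ : ℝ) * M * q)) * ((δ : ℝ) * M * (2 * p)) :=
            mul_le_mul h1 hAB (norm_nonneg _) (by positivity)
        _ = 4 * (δ : ℝ) ^ 2 * M ^ 2 * p * q := by ring
    calc (‖A‖ ^ 2 - ‖B‖ ^ 2) ^ 2
        = |‖A‖ ^ 2 - ‖B‖ ^ 2| ^ 2 := (sq_abs _).symm
      _ ≤ (4 * (δ : ℝ) ^ 2 * M ^ 2 * p * q) ^ 2 := pow_le_pow_left₀ (abs_nonneg _) hE 2
  · rw [if_neg hstr]
    have htri : t + δ ≤ d / 2 ∨ (d / 2 ≤ t ∧ t + 2 * δ ≤ d) ∨ d ≤ t + δ := by omega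
    have hzero : ‖A‖ = ‖B‖ := by
      rcases htri with h | h | h
      · have hAB : A = B := by
          refine Finset.sum_congr rfl fun n _ => ?_
          by_cases hcn : c n = 0
          · rw [hcn]; simp
          · have hj := hsupp n hcn
            have hw := hwin n hcn
            have hjt : ((n : ℕ) + s) % d + t < d := by omega
            rw [Nat.mod_eq_of_lt hjt] at hw
            rw [xpm_eq p q hδd hd2 n (Or.inl (by omega))]
        rw [hAB]
      · have hAB : A = -B := by
          rw [hB, ← Finset.sum_neg_distrib]
          refine Finset.sum_congr rfl fun n _ => ?_
          by_cases hcn : c n = 0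
          · rw [hcn]; simp
          · have hj := hsupp n hcn
            have hw := hwin n hcn
            have hjt : ((n : ℕ) + s) % d + t < d := by omega
            rw [Nat.mod_eq_of_lt hjt] at hw
            rw [xpm_neg p q hδd hd2 n (by omega) (by omega), map_neg, mul_neg]
        rw [hAB, norm_neg]
      · have hAB : A = B := by
          refine Finset.sum_congr rfl fun n _ => ?_
          by_cases hcn : c n = 0
          · rw [hcn]; simp
          · have hj := hsupp n hcn
            have hw := hwin n hcn
            rcases Nat.lt_or_ge (((n : ℕ) + s) % d + t) d with hjt | hjt
            · rw [Nat.mod_eq_of_lt hjt] at hw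
              rw [xpm_eq p q hδd hd2 n (Or.inr (by omega))]
            · have hmod : (((n : ℕ) + s) % d + t) % d = ((n : ℕ) + s) % d + t - d := by
                rw [Nat.mod_eq_sub_mod hjt]
                exact Nat.mod_eq_of_lt (by omega)
              rw [hmod] at hw
              rw [xpm_eq p q hδd hd2 n (Or.inl (by omega))]
        rw [hAB]
    rw [hzero]
    simp

/-- `‖Y(x⁺) - Y(x⁻)‖₂² ≤ C K ‖m‖_∞⁴ q² p² δ⁵ / a`. -/
theorem Y_diff_bound : ∃ C : ℝ, 0 < C ∧
    ∀ (d δ a L K : ℕ) (m : Fin K → Fin d → ℂ) (p q : ℝ),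
      0 < d → Even d → 0 < δ → 4 * δ ≤ d → 0 < a → 0 < L → d = a * L → 1 ≤ a → a < δ →
      (∀ k n, m k n ≠ 0 → (n : ℕ) < δ) →
      0 < p → p ≤ q →
      ‖Ymap L m a (xpm d δ p q 1) - Ymap L m a (xpm d δ p q (-1))‖ ^ 2
        ≤ C * (K : ℝ) * maskSup m ^ 4 * q ^ 2 * p ^ 2 * (δ : ℝ) ^ 5 / (a : ℝ) := by
  refine ⟨64, by norm_num, ?_⟩
  intro d δ a L K m p q hd hdeven hδ hδd ha hL hdal ha1 haδ hm hp hpq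
  have hq : 0 < q := lt_of_lt_of_le hp hpq
  have hd2 : d % 2 = 0 := Nat.even_iff.mp hdeven
  set M := maskSup m with hMdef
  have hM0 : 0 ≤ M :=
    Real.iSup_nonneg fun k => Real.iSup_nonneg fun n => norm_nonneg _
  have hmM : ∀ k n, ‖m k n‖ ≤ M := by
    intro k n
    have h1 : ‖m k n‖ ≤ ⨆ n', ‖m k n'‖ :=
      le_ciSup (f := fun n' => ‖m k n'‖)
        (Set.Finite.bddAbove (Set.finite_range _)) n
    have h2 : (⨆ n', ‖m k n'‖) ≤ M :=
      le_ciSup (f := fun k => ⨆ n', ‖m k n'‖)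
        (Set.Finite.bddAbove (Set.finite_range _)) k
    exact h1.trans h2
  have hYsum : ∀ (x : Fin d → ℂ) (kl : Fin K × Fin L), Ymap L m a x kl
      = ‖∑ n : Fin d,
          m kl.1 ⟨((n : ℕ) + ((kl.2 : ℕ) + 1) * a) % d, Nat.mod_lt _ hd⟩ *
          (starRingEnd ℂ) (x n)‖ ^ 2 := by
    intro x kl
    unfold Ymap
    show ‖innerC (shift ((((kl.2 : ℕ) + 1) * a : ℕ) : ℤ) (m kl.1)) x‖ ^ 2 = _
    rw [innerC_shift hd]
  have hkey : ∀ kl : Fin K × Fin L,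
      (Ymap L m a (xpm d δ p q 1) kl - Ymap L m a (xpm d δ p q (-1)) kl) ^ 2
        ≤ if (d / 2 - δ < (L - 1 - (kl.2 : ℕ)) * a ∧ (L - 1 - (kl.2 : ℕ)) * a < d / 2)
            ∨ (d - 2 * δ < (L - 1 - (kl.2 : ℕ)) * a ∧ (L - 1 - (kl.2 : ℕ)) * a < d - δ)
          then (4 * (δ : ℝ) ^ 2 * M ^ 2 * p * q) ^ 2 else 0 := by
    intro kl
    have hLℓ := kl.2.isLt
    have hst : ((kl.2 : ℕ) + 1) * a + (L - 1 - (kl.2 : ℕ)) * a = d := by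
      have h1 : ((kl.2 : ℕ) + 1) * a + (L - 1 - (kl.2 : ℕ)) * a
          = (((kl.2 : ℕ) + 1) + (L - 1 - (kl.2 : ℕ))) * a := by ring
      have h2 : ((kl.2 : ℕ) + 1) + (L - 1 - (kl.2 : ℕ)) = L := by omega
      rw [h1, h2, hdal, Nat.mul_comm]
    have htd : (L - 1 - (kl.2 : ℕ)) * a < d := by
      have h1 : (L - 1 - (kl.2 : ℕ)) * a ≤ (L - 1) * a :=
        Nat.mul_le_mul_right a (by omega)
      have h2 : (L - 1) * a + a = d := by
        have : (L - 1) * a + a = ((L - 1) + 1) * a := by ring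
        rw [this]
        have : (L - 1) + 1 = L := by omega
        rw [this, hdal, Nat.mul_comm]
      omega
    rw [hYsum, hYsum]
    exact entry_bound hp hpq hM0 hδ hδd hd2 hd (m kl.1) (hm kl.1)
      (fun n => hmM kl.1 n) hst htd
  have hcard : (Finset.univ.filter (fun ℓ : Fin L =>
      (d / 2 - δ < (L - 1 - (ℓ : ℕ)) * a ∧ (L - 1 - (ℓ : ℕ)) * a < d / 2)
        ∨ (d - 2 * δ < (L - 1 - (ℓ : ℕ)) * a ∧ (L - 1 - (ℓ : ℕ)) * a < d - δ))).card
      ≤ 4 * (δ / a) := by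
    have hsub := Finset.filter_or (fun ℓ : Fin L =>
        (d / 2 - δ < (L - 1 - (ℓ : ℕ)) * a ∧ (L - 1 - (ℓ : ℕ)) * a < d / 2))
      (fun ℓ : Fin L =>
        (d - 2 * δ < (L - 1 - (ℓ : ℕ)) * a ∧ (L - 1 - (ℓ : ℕ)) * a < d - δ))
      (Finset.univ)
    rw [hsub]
    refine le_trans (Finset.card_union_le _ _) ?_
    have hc1 := count_le L a δ (d / 2 - δ) (d / 2) ha haδ.le (by omega)
    have hc2 := count_le L a δ (d - 2 * δ) (d - δ) ha haδ.le (by omega)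
    omega
  have hBd0 : (0 : ℝ) ≤ (4 * (δ : ℝ) ^ 2 * M ^ 2 * p * q) ^ 2 := sq_nonneg _
  have ha0 : (0 : ℝ) < (a : ℝ) := by exact_mod_cast ha
  calc ‖Ymap L m a (xpm d δ p q 1) - Ymap L m a (xpm d δ p q (-1))‖ ^ 2
      = ∑ kl : Fin K × Fin L,
          (Ymap L m a (xpm d δ p q 1) kl - Ymap L m a (xpm d δ p q (-1)) kl) ^ 2 := by
        rw [EuclideanSpace.norm_eq, Real.sq_sqrt (by positivity)]
        exact Finset.sum_congr rfl fun kl _ => by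
          simp [PiLp.sub_apply, Real.norm_eq_abs, sq_abs]
    _ ≤ ∑ kl : Fin K × Fin L,
          (if (d / 2 - δ < (L - 1 - (kl.2 : ℕ)) * a ∧ (L - 1 - (kl.2 : ℕ)) * a < d / 2)
              ∨ (d - 2 * δ < (L - 1 - (kl.2 : ℕ)) * a ∧ (L - 1 - (kl.2 : ℕ)) * a < d - δ)
            then (4 * (δ : ℝ) ^ 2 * M ^ 2 * p * q) ^ 2 else 0) :=
        Finset.sum_le_sum fun kl _ => hkey kl
    _ = ∑ _k : Fin K, ∑ ℓ : Fin L,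
          (if (d / 2 - δ < (L - 1 - (ℓ : ℕ)) * a ∧ (L - 1 - (ℓ : ℕ)) * a < d / 2)
              ∨ (d - 2 * δ < (L - 1 - (ℓ : ℕ)) * a ∧ (L - 1 - (ℓ : ℕ)) * a < d - δ)
            then (4 * (δ : ℝ) ^ 2 * M ^ 2 * p * q) ^ 2 else 0) := Fintype.sum_prod_type _
    _ = (K : ℝ) * ∑ ℓ : Fin L,
          (if (d / 2 - δ < (L - 1 - (ℓ : ℕ)) * a ∧ (L - 1 - (ℓ : ℕ)) * a < d / 2)
              ∨ (d - 2 * δ < (L - 1 - (ℓ : ℕ)) * a ∧ (L - 1 - (ℓ : ℕ)) * a < d - δ)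
            then (4 * (δ : ℝ) ^ 2 * M ^ 2 * p * q) ^ 2 else 0) := by
        rw [Finset.sum_const, Finset.card_univ, Fintype.card_fin, nsmul_eq_mul]
    _ = (K : ℝ) * (((Finset.univ.filter (fun ℓ : Fin L =>
          (d / 2 - δ < (L - 1 - (ℓ : ℕ)) * a ∧ (L - 1 - (ℓ : ℕ)) * a < d / 2)
            ∨ (d - 2 * δ < (L - 1 - (ℓ : ℕ)) * a ∧ (L - 1 - (ℓ : ℕ)) * a < d - δ))).card : ℝ)
          * (4 * (δ : ℝ) ^ 2 * M ^ 2 * p * q) ^ 2) := by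
        rw [← Finset.sum_filter, Finset.sum_const, nsmul_eq_mul]
    _ ≤ (K : ℝ) * ((4 * ((δ : ℝ) / (a : ℝ))) * (4 * (δ : ℝ) ^ 2 * M ^ 2 * p * q) ^ 2) := by
        refine mul_le_mul_of_nonneg_left (mul_le_mul_of_nonneg_right ?_ hBd0)
          (Nat.cast_nonneg K)
        calc ((Finset.univ.filter _).card : ℝ) ≤ ((4 * (δ / a) : ℕ) : ℝ) := by
              exact_mod_cast hcard
          _ ≤ 4 * ((δ : ℝ) / (a : ℝ)) := by
              push_cast
              have := Nat.cast_div_le (α := ℝ) (m := δ) (n := a)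
              linarith
    _ = 64 * (K : ℝ) * M ^ 4 * q ^ 2 * p ^ 2 * (δ : ℝ) ^ 5 / (a : ℝ) := by
        field_simp
        ring
end
end

section
/- There is a universal constant C > 0 with the following property. Let d be an even positive integer, δ ≤ d/4 a positive integer, a and L positive integers with d = aL and 1 ≤ a < δ, b > 4, let m_1,…,m_{2δ−1} be the windowed Fourier masks, and let 0 < p ≤ q. Then ‖Z(x⁺) − Z(x⁻)‖₂² ≤ C·(2δ−1)^{1/2}·(δ/a)·p²·(e^{1/b} − 1)^{−2}. -/
open scoped BigOperators

noncomputable section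

/-- The windowed Fourier masks: `m_k(n) = e^{-n/b} (2δ-1)^{-1/4} e^{2πi(k-1)(n-1)/(2δ-1)}`
for `1 ≤ n ≤ δ`, and `0` for `δ < n ≤ d` (the 0-based indices `k, n` stand for `k-1, n-1`). -/
def fourierMask (d δ : ℕ) (b : ℝ) : Fin (2 * δ - 1) → Fin d → ℂ :=
  fun k n =>
    if (n : ℕ) < δ then
      ((Real.exp (-(((n : ℕ) : ℝ) + 1) / b) * ((2 * δ - 1 : ℕ) : ℝ) ^ (-(1 : ℝ) / 4) : ℝ) : ℂ) *
        Complex.exp (2 * (Real.pi : ℂ) * Complex.I * ((k : ℕ) : ℂ) * ((n : ℕ) : ℂ) /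
          ((2 * δ - 1 : ℕ) : ℂ))
    else 0


private lemma mod_decomp' (d x : ℕ) (hd : 0 < d) (hx : x < 2*d) : x % d = x ∨ x % d + d = x := by
  rcases Nat.lt_or_ge x d with h|h
  · left; exact Nat.mod_eq_of_lt h
  · right
    have h2 : x % d = (x - d) % d := Nat.mod_eq_sub_mod h
    have h3 : (x - d) % d = x - d := Nat.mod_eq_of_lt (by omega)
    omega

private lemma arith_core' (d δ s i w v u r3 r4 : ℕ) (hd2 : d % 2 = 0) (hδ : 2 ≤ δ) (h4 : 4*δ ≤ d)
    (hs : s ≤ d) (hi : i < d) (hw1 : d/2 ≤ w) (hw2 : w < d - δ)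
    (hvd : v < d) (hud : u < d) (hr3d : r3 < d) (hr4d : r4 < d)
    (hv : v = i + s ∨ v + d = i + s) (hvδ : v < δ)
    (hu : u = w + s ∨ u + d = w + s) (huδ : u < δ)
    (hr3 : r3 = d/2 - 1 + s ∨ r3 + d = d/2 - 1 + s)
    (hr4 : r4 = d - δ - 1 + s ∨ r4 + d = d - δ - 1 + s)
    (hiS : i < d/2 ∨ d - δ ≤ i) :
    (d/2 - δ ≤ i) ∧ (r3 < δ - 1 ∨ r4 < δ - 1) := by omega

private lemma arith_main' (d δ s i w : ℕ) (hd2 : d % 2 = 0) (hδ : 2 ≤ δ) (h4 : 4*δ ≤ d) (hs : s ≤ d)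
    (hi : i < d) (hw1 : d/2 ≤ w) (hw2 : w < d - δ)
    (hiW : (i+s) % d < δ) (hwW : (w+s) % d < δ)
    (hiS : i < d/2 ∨ d - δ ≤ i) :
    (d/2 - δ ≤ i) ∧ ((d/2 - 1 + s) % d < δ - 1 ∨ (d - δ - 1 + s) % d < δ - 1) := by
  have hd : 0 < d := by omega
  exact arith_core' d δ s i w _ _ _ _ hd2 hδ h4 hs hi hw1 hw2
    (Nat.mod_lt _ hd) (Nat.mod_lt _ hd) (Nat.mod_lt _ hd) (Nat.mod_lt _ hd)
    (mod_decomp' d (i+s) hd (by omega)) hiW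
    (mod_decomp' d (w+s) hd (by omega)) hwW
    (mod_decomp' d (d/2-1+s) hd (by omega))
    (mod_decomp' d (d-δ-1+s) hd (by omega)) hiS

private lemma intToFin_val' (d : ℕ) (hd : 0 < d) (i s : ℕ) :
    (intToFin d hd ((i:ℤ) + (s:ℤ))).val = (i + s) % d := by
  show (((i:ℤ) + (s:ℤ)) % (d:ℤ)).toNat = (i + s) % d
  have h : ((i:ℤ) + (s:ℤ)) % (d:ℤ) = (((i + s) % d : ℕ) : ℤ) := by push_cast; ring
  rw [h, Int.toNat_natCast]

private lemma sum_shift' (d : ℕ) (hd : 0 < d) (s : ℕ) (g : Fin d → ℝ) :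
    ∑ i : Fin d, g (intToFin d hd ((i : ℤ) + (s:ℤ))) = ∑ j : Fin d, g j := by
  apply Fintype.sum_bijective (fun i : Fin d => intToFin d hd ((i : ℤ) + (s:ℤ)))
  · apply Finite.injective_iff_bijective.mp
    intro i j hij
    have h := congrArg Fin.val hij
    rw [intToFin_val', intToFin_val'] at h
    have h2 : (i:ℕ) % d = (j:ℕ) % d := Nat.ModEq.add_right_cancel' s h
    exact Fin.ext (by rwa [Nat.mod_eq_of_lt i.isLt, Nat.mod_eq_of_lt j.isLt] at h2)
  · intro x; rfl

private lemma count_filter_mod' (d a L c δ' : ℕ) (hd : d = a*L) (ha : 0 < a) (hL : 0 < L) :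
    (Finset.univ.filter (fun ℓ : Fin L => (c + ((ℓ:ℕ)+1)*a) % d < δ')).card ≤ δ'/a + 1 := by
  classical
  have hd0 : 0 < d := hd ▸ Nat.mul_pos ha hL
  have key := Finset.card_le_card_of_injOn
    (s := Finset.univ.filter (fun ℓ : Fin L => (c + ((ℓ:ℕ)+1)*a) % d < δ'))
    (f := fun ℓ : Fin L => ((c + ((ℓ:ℕ)+1)*a) % d) / a)
    (t := Finset.range (δ'/a + 1)) ?_ ?_
  · simpa using key
  · intro ℓ hℓ
    simp only [Finset.mem_coe, Finset.mem_filter, Finset.mem_univ, true_and] at hℓ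
    simp only [Finset.mem_coe, Finset.mem_range]
    have h5 : ((c + ((ℓ:ℕ)+1)*a) % d) / a ≤ δ' / a := Nat.div_le_div_right hℓ.le
    omega
  · intro ℓ₁ h₁ ℓ₂ h₂ heq
    simp only [Finset.coe_filter, Set.mem_setOf_eq, Finset.mem_univ, true_and] at h₁ h₂
    simp only at heq
    have hdvd : a ∣ d := ⟨L, hd⟩
    have hm₁ : (c + ((ℓ₁:ℕ)+1)*a) % d % a = c % a := by
      rw [Nat.mod_mod_of_dvd _ hdvd, Nat.add_mul_mod_self_right]
    have hm₂ : (c + ((ℓ₂:ℕ)+1)*a) % d % a = c % a := by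
      rw [Nat.mod_mod_of_dvd _ hdvd, Nat.add_mul_mod_self_right]
    have hveq : (c + ((ℓ₁:ℕ)+1)*a) % d = (c + ((ℓ₂:ℕ)+1)*a) % d := by
      conv_lhs => rw [← Nat.div_add_mod ((c + ((ℓ₁:ℕ)+1)*a) % d) a]
      conv_rhs => rw [← Nat.div_add_mod ((c + ((ℓ₂:ℕ)+1)*a) % d) a]
      rw [hm₁, hm₂, heq]
    have h3 : ((ℓ₁:ℕ)+1)*a % d = ((ℓ₂:ℕ)+1)*a % d :=
      Nat.ModEq.add_left_cancel' c hveq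
    rw [hd, mul_comm ((ℓ₁:ℕ)+1) a, mul_comm ((ℓ₂:ℕ)+1) a,
      Nat.mul_mod_mul_left, Nat.mul_mod_mul_left] at h3
    have h4 : ((ℓ₁:ℕ)+1) % L = ((ℓ₂:ℕ)+1) % L := Nat.eq_of_mul_eq_mul_left ha h3
    have e₁ := mod_decomp' L ((ℓ₁:ℕ)+1) hL (by have := ℓ₁.isLt; omega)
    have e₂ := mod_decomp' L ((ℓ₂:ℕ)+1) hL (by have := ℓ₂.isLt; omega)
    have l1 := ℓ₁.isLt; have l2 := ℓ₂.isLt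
    exact Fin.ext (by omega)

private lemma mask_abs' (d δ : ℕ) (b : ℝ) (k : Fin (2*δ-1)) (n : Fin d) :
    ‖fourierMask d δ b k n‖
      = if (n:ℕ) < δ then Real.exp (-(((n:ℕ):ℝ)+1)/b) * ((2*δ-1:ℕ):ℝ) ^ (-(1:ℝ)/4) else 0 := by
  unfold fourierMask
  split_ifs with h
  · rw [norm_mul, Complex.norm_real, Real.norm_eq_abs]
    have hre : (2 * (Real.pi:ℂ) * Complex.I * ((k:ℕ):ℂ) * ((n:ℕ):ℂ) / ((2*δ-1:ℕ):ℂ))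
        = ((2 * Real.pi * ((k:ℕ):ℝ) * ((n:ℕ):ℝ) / ((2*δ-1:ℕ):ℝ) : ℝ) : ℂ) * Complex.I := by
      push_cast; ring
    rw [hre, Complex.norm_exp_ofReal_mul_I, mul_one, abs_of_nonneg (by positivity)]
  · simp

private lemma geom_bound' (b : ℝ) (hb : 4 < b) (δ : ℕ) :
    ∑ n ∈ Finset.range δ, Real.exp (-((n:ℝ)+1)/b) ≤ 1 / (Real.exp (1/b) - 1) := by
  have hb0 : (0:ℝ) < b := by linarith
  set r := Real.exp (-(1/b)) with hr
  have hr0 : 0 < r := Real.exp_pos _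
  have hr1 : r < 1 := by
    rw [hr, Real.exp_lt_one_iff]
    have : (0:ℝ) < 1/b := by positivity
    linarith
  have hterm : ∀ n : ℕ, Real.exp (-((n:ℝ)+1)/b) = r ^ (n+1) := by
    intro n
    rw [hr, ← Real.exp_nat_mul]
    congr 1; push_cast; ring
  have hSum : ∑ n ∈ Finset.range δ, r ^ n ≤ 1 / (1 - r) := by
    rw [le_div_iff₀ (by linarith)]
    have h := geom_sum_mul r δ
    have h2 : (0:ℝ) ≤ r ^ δ := pow_nonneg hr0.le δ
    nlinarith
  have hu : 1 < Real.exp (1/b) := by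
    calc (1:ℝ) = Real.exp 0 := Real.exp_zero.symm
    _ < _ := Real.exp_lt_exp.mpr (by positivity)
  calc ∑ n ∈ Finset.range δ, Real.exp (-((n:ℝ)+1)/b)
      = ∑ n ∈ Finset.range δ, r ^ (n+1) := Finset.sum_congr rfl (fun n _ => hterm n)
    _ = (∑ n ∈ Finset.range δ, r ^ n) * r := by
        rw [Finset.sum_mul]; exact Finset.sum_congr rfl fun n _ => pow_succ r n
    _ ≤ (1/(1-r)) * r := mul_le_mul_of_nonneg_right hSum hr0.le
    _ = 1 / (Real.exp (1/b) - 1) := by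
        rw [hr, Real.exp_neg]
        have h1 : Real.exp (1/b) - 1 ≠ 0 := by linarith
        have h0 : Real.exp (1/b) ≠ 0 := (Real.exp_pos _).ne'
        field_simp

private lemma mask_abs_sum' (d δ : ℕ) (b : ℝ) (hδd : δ ≤ d) (hb : 4 < b) (k : Fin (2*δ-1)) :
    ∑ j : Fin d, ‖fourierMask d δ b k j‖
      ≤ ((2*δ-1:ℕ):ℝ) ^ (-(1:ℝ)/4) / (Real.exp (1/b) - 1) := by
  set M₀ := ((2*δ-1:ℕ):ℝ) ^ (-(1:ℝ)/4) with hM₀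
  have hM0 : 0 ≤ M₀ := by positivity
  set F : ℕ → ℝ := fun n => if n < δ then Real.exp (-((n:ℝ)+1)/b) * M₀ else 0 with hF
  have h1 : ∑ j : Fin d, ‖fourierMask d δ b k j‖ = ∑ n ∈ Finset.range d, F n := by
    rw [← Fin.sum_univ_eq_sum_range F d]
    exact Finset.sum_congr rfl fun j _ => mask_abs' d δ b k j
  rw [h1]
  have h2 : ∑ n ∈ Finset.range d, F n = (∑ n ∈ Finset.range δ, Real.exp (-((n:ℝ)+1)/b)) * M₀ := by
    rw [← Finset.sum_range_add_sum_Ico F hδd]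
    have ha : ∑ n ∈ Finset.Ico δ d, F n = 0 :=
      Finset.sum_eq_zero fun n hn => if_neg (by simp at hn; omega)
    have hbb : ∑ n ∈ Finset.range δ, F n = ∑ n ∈ Finset.range δ, Real.exp (-((n:ℝ)+1)/b) * M₀ :=
      Finset.sum_congr rfl fun n hn => if_pos (Finset.mem_range.mp hn)
    rw [ha, hbb, add_zero, Finset.sum_mul]
  rw [h2, div_eq_mul_one_div, mul_comm M₀]
  exact mul_le_mul_of_nonneg_right (geom_bound' b hb δ) hM0

private lemma xpm_conj' (d δ : ℕ) (p q ε : ℝ) (i : Fin d) :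
    (starRingEnd ℂ) (xpm d δ p q ε i) = xpm d δ p q ε i := by
  unfold xpm; split_ifs <;> exact Complex.conj_ofReal _

private lemma xpm_off' (d δ : ℕ) (p q : ℝ) (i : Fin d) (h : ¬ (d/2 ≤ (i:ℕ) ∧ (i:ℕ) < d - δ)) :
    xpm d δ p q (-1) i = xpm d δ p q 1 i := by
  unfold xpm; split_ifs with h1 h2 h3 <;> first | rfl | omega

private lemma xpm_on' (d δ : ℕ) (p q : ℝ) (i : Fin d) (h : d/2 ≤ (i:ℕ) ∧ (i:ℕ) < d - δ) :
    xpm d δ p q (-1) i = - xpm d δ p q 1 i := by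
  unfold xpm
  rw [if_neg (by omega), if_neg (by omega), if_pos h.2, if_neg (by omega), if_neg (by omega),
    if_pos h.2]
  push_cast; ring

set_option maxHeartbeats 1000000 in
private lemma entry_bound' (d δ a L : ℕ) (b p q : ℝ)
    (hd : 0 < d) (hdev : d % 2 = 0) (hδ : 0 < δ) (h4 : 4*δ ≤ d) (ha : 0 < a) (hL : 0 < L)
    (hdal : d = a * L) (haδ : a < δ) (hb : 4 < b) (hp : 0 < p) (hpq : p ≤ q)
    (k : Fin (2*δ-1)) (ℓ : Fin L) :
    |Zmap L (fourierMask d δ b) a (xpm d δ p q 1) (k, ℓ)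
      - Zmap L (fourierMask d δ b) a (xpm d δ p q (-1)) (k, ℓ)|
    ≤ if (d/2 - 1 + ((ℓ:ℕ)+1)*a) % d < δ - 1 ∨ (d - δ - 1 + ((ℓ:ℕ)+1)*a) % d < δ - 1
      then 2 * p * (((2*δ-1:ℕ):ℝ) ^ (-(1:ℝ)/4) / (Real.exp (1/b) - 1)) else 0 := by
  classical
  have hδ2 : 2 ≤ δ := by omega
  have hE : (0:ℝ) < Real.exp (1/b) - 1 := by
    have : (1:ℝ) = Real.exp 0 := Real.exp_zero.symm
    have h2 : Real.exp 0 < Real.exp (1/b) := Real.exp_lt_exp.mpr (by positivity)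
    linarith
  have hRHSpos : (0:ℝ) ≤ 2 * p * (((2*δ-1:ℕ):ℝ) ^ (-(1:ℝ)/4) / (Real.exp (1/b) - 1)) := by
    have h21 : (0:ℝ) < ((2*δ-1:ℕ):ℝ) := by
      have : 0 < 2*δ-1 := by omega
      exact_mod_cast this
    positivity
  have hRHS0 : (0:ℝ) ≤ if (d/2 - 1 + ((ℓ:ℕ)+1)*a) % d < δ - 1 ∨ (d - δ - 1 + ((ℓ:ℕ)+1)*a) % d < δ - 1
      then 2 * p * (((2*δ-1:ℕ):ℝ) ^ (-(1:ℝ)/4) / (Real.exp (1/b) - 1)) else 0 := by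
    split_ifs with h
    · exact hRHSpos
    · exact le_refl 0
  set s : ℕ := ((ℓ:ℕ)+1)*a with hsdef
  have hs : s ≤ d := by
    have h1 : (ℓ:ℕ) + 1 ≤ L := ℓ.isLt
    calc s = ((ℓ:ℕ)+1)*a := rfl
      _ ≤ L * a := Nat.mul_le_mul_right a h1
      _ = d := by rw [hdal, mul_comm]
  set mm : Fin d → ℂ := fun i => fourierMask d δ b k (intToFin d hd ((i : ℤ) + (s:ℤ))) with hmm
  set xp : Fin d → ℂ := xpm d δ p q 1 with hxp
  set xm : Fin d → ℂ := xpm d δ p q (-1) with hxm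
  have hval : ∀ i : Fin d, (intToFin d hd ((i : ℤ) + (s:ℤ))).val = ((i:ℕ) + s) % d :=
    fun i => intToFin_val' d hd (i:ℕ) s
  have hm0 : ∀ i : Fin d, ¬ (((i:ℕ) + s) % d < δ) → mm i = 0 := by
    intro i h
    show fourierMask d δ b k _ = 0
    unfold fourierMask
    rw [hval i, if_neg h]
  set P : Fin d → Prop := fun i => d/2 ≤ (i:ℕ) ∧ (i:ℕ) < d - δ with hP
  set A : ℂ := ∑ i ∈ Finset.univ.filter (fun i => ¬ P i), mm i * (starRingEnd ℂ) (xp i) with hA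
  set B : ℂ := ∑ i ∈ Finset.univ.filter P, mm i * (starRingEnd ℂ) (xp i) with hB
  have hZp : Zmap L (fourierMask d δ b) a xp (k, ℓ) = ‖B + A‖ := by
    have : Zmap L (fourierMask d δ b) a xp (k, ℓ)
        = ‖∑ i : Fin d, mm i * (starRingEnd ℂ) (xp i)‖ := rfl
    rw [this, ← Finset.sum_filter_add_sum_filter_not Finset.univ P
      (fun i => mm i * (starRingEnd ℂ) (xp i))]
  have hZm : Zmap L (fourierMask d δ b) a xm (k, ℓ) = ‖-B + A‖ := by
    have h1 : Zmap L (fourierMask d δ b) a xm (k, ℓ)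
        = ‖∑ i : Fin d, mm i * (starRingEnd ℂ) (xm i)‖ := rfl
    rw [h1, ← Finset.sum_filter_add_sum_filter_not Finset.univ P
      (fun i => mm i * (starRingEnd ℂ) (xm i))]
    congr 2
    · rw [hB, ← Finset.sum_neg_distrib]
      refine Finset.sum_congr rfl fun i hi => ?_
      have hPi : P i := (Finset.mem_filter.mp hi).2
      rw [hxm, hxp, xpm_on' d δ p q i hPi, map_neg]
      ring
    · refine Finset.sum_congr rfl fun i hi => ?_
      have hPi : ¬ P i := (Finset.mem_filter.mp hi).2
      rw [hxm, hxp, xpm_off' d δ p q i hPi]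
  rw [hZp, hZm]
  have key1 : |‖B + A‖ - ‖-B + A‖| ≤ 2 * ‖B‖ := by
    calc |‖B + A‖ - ‖-B + A‖|
        ≤ ‖(B + A) - (-B + A)‖ := abs_norm_sub_norm_le _ _
      _ = ‖2 * B‖ := by ring_nf
      _ = 2 * ‖B‖ := by rw [norm_mul, Complex.norm_two]
  have key2 : |‖B + A‖ - ‖-B + A‖| ≤ 2 * ‖A‖ := by
    have hsym : ‖-B + A‖ = ‖-(-B + A)‖ := (norm_neg _).symm
    calc |‖B + A‖ - ‖-B + A‖|
        = |‖B + A‖ - ‖B - A‖| := by rw [hsym]; ring_nf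
      _ ≤ ‖(B + A) - (B - A)‖ := abs_norm_sub_norm_le _ _
      _ = ‖2 * A‖ := by ring_nf
      _ = 2 * ‖A‖ := by rw [norm_mul, Complex.norm_two]
  by_cases hBzero : ∀ i ∈ Finset.univ.filter P, (((i:Fin d):ℕ) + s) % d ≥ δ
  · have hB0 : B = 0 := Finset.sum_eq_zero fun i hi => by
      rw [hm0 i (by exact not_lt.mpr (hBzero i hi))]; ring
    calc |‖B + A‖ - ‖-B + A‖| ≤ 2 * ‖B‖ := key1
      _ = 0 := by rw [hB0, norm_zero, mul_zero]
      _ ≤ _ := hRHS0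
  · push_neg at hBzero
    obtain ⟨w, hwmem, hwW⟩ := hBzero
    have hwP : P w := (Finset.mem_filter.mp hwmem).2
    by_cases hAzero : ∀ i ∈ Finset.univ.filter (fun i => ¬ P i), (((i:Fin d):ℕ) + s) % d ≥ δ
    · have hA0 : A = 0 := Finset.sum_eq_zero fun i hi => by
        rw [hm0 i (by exact not_lt.mpr (hAzero i hi))]; ring
      calc |‖B + A‖ - ‖-B + A‖| ≤ 2 * ‖A‖ := key2
        _ = 0 := by rw [hA0, norm_zero, mul_zero]
        _ ≤ _ := hRHS0
    · push_neg at hAzero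
      obtain ⟨i₀, hi₀mem, hi₀W⟩ := hAzero
      have hi₀P : ¬ P i₀ := (Finset.mem_filter.mp hi₀mem).2
      have hi₀S : (i₀:ℕ) < d/2 ∨ d - δ ≤ (i₀:ℕ) := by
        rw [hP] at hi₀P; simp only [not_and, not_lt] at hi₀P; omega
      have harith := arith_main' d δ s (i₀:ℕ) (w:ℕ) hdev hδ2 h4 hs i₀.isLt hwP.1 hwP.2 hi₀W hwW hi₀S
      rw [if_pos harith.2]
      have hAbound : ‖A‖ ≤ p * (((2*δ-1:ℕ):ℝ) ^ (-(1:ℝ)/4) / (Real.exp (1/b) - 1)) := by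
        have step1 : ‖A‖ ≤ ∑ i ∈ Finset.univ.filter (fun i => ¬ P i),
            ‖mm i * (starRingEnd ℂ) (xp i)‖ := norm_sum_le _ _
        have step2 : ∀ i ∈ Finset.univ.filter (fun i => ¬ P i),
            ‖mm i * (starRingEnd ℂ) (xp i)‖ ≤ ‖mm i‖ * p := by
          intro i hi
          have hiP : ¬ P i := (Finset.mem_filter.mp hi).2
          by_cases hiW : ((i:ℕ) + s) % d < δ
          · have hiS : (i:ℕ) < d/2 ∨ d - δ ≤ (i:ℕ) := by
              rw [hP] at hiP; simp only [not_and, not_lt] at hiP; omega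
            have har := arith_main' d δ s (i:ℕ) (w:ℕ) hdev hδ2 h4 hs i.isLt hwP.1 hwP.2 hiW hwW hiS
            have hxpi : xp i = (p:ℂ) := by
              rw [hxp]; unfold xpm
              rw [hP] at hiP; simp only [not_and, not_lt] at hiP
              rcases hiS with hc | hc
              · rw [if_neg (by omega), if_pos hc]
              · rw [if_neg (by omega), if_neg (by omega), if_neg (by omega)]
            rw [norm_mul, hxpi, Complex.norm_conj, Complex.norm_real, Real.norm_eq_abs, abs_of_pos hp]
          · rw [hm0 i hiW, zero_mul, norm_zero]
            positivity
        have step3 : ∑ i ∈ Finset.univ.filter (fun i => ¬ P i), ‖mm i‖ * p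
            ≤ ∑ i : Fin d, ‖mm i‖ * p := by
          apply Finset.sum_le_sum_of_subset_of_nonneg (Finset.filter_subset _ _)
          intro i _ _
          positivity
        have step4 : ∑ i : Fin d, ‖mm i‖ * p
            = (∑ j : Fin d, ‖fourierMask d δ b k j‖) * p := by
          rw [← Finset.sum_mul]
          congr 1
          exact sum_shift' d hd s (fun j => ‖fourierMask d δ b k j‖)
        calc ‖A‖ ≤ _ := step1
          _ ≤ ∑ i ∈ Finset.univ.filter (fun i => ¬ P i), ‖mm i‖ * p :=
              Finset.sum_le_sum step2
          _ ≤ ∑ i : Fin d, ‖mm i‖ * p := step3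
          _ = (∑ j : Fin d, ‖fourierMask d δ b k j‖) * p := step4
          _ ≤ (((2*δ-1:ℕ):ℝ) ^ (-(1:ℝ)/4) / (Real.exp (1/b) - 1)) * p :=
              mul_le_mul_of_nonneg_right (mask_abs_sum' d δ b (by omega) hb k) hp.le
          _ = p * (((2*δ-1:ℕ):ℝ) ^ (-(1:ℝ)/4) / (Real.exp (1/b) - 1)) := mul_comm _ _
      calc |‖B + A‖ - ‖-B + A‖| ≤ 2 * ‖A‖ := key2
        _ ≤ 2 * (p * (((2*δ-1:ℕ):ℝ) ^ (-(1:ℝ)/4) / (Real.exp (1/b) - 1))) := by linarith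
        _ = 2 * p * (((2*δ-1:ℕ):ℝ) ^ (-(1:ℝ)/4) / (Real.exp (1/b) - 1)) := by ring


set_option maxHeartbeats 1000000 in
/-- For the windowed Fourier masks,
`‖Z(x⁺) - Z(x⁻)‖₂² ≤ C (2δ-1)^{1/2} (δ/a) p² (e^{1/b} - 1)^{-2}`. -/
theorem Z_diff_bound_fourier : ∃ C : ℝ, 0 < C ∧
    ∀ (d δ a L : ℕ) (b p q : ℝ),
      0 < d → Even d → 0 < δ → 4 * δ ≤ d → 0 < a → 0 < L → d = a * L → 1 ≤ a → a < δ →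
      4 < b → 0 < p → p ≤ q →
      ‖Zmap L (fourierMask d δ b) a (xpm d δ p q 1)
          - Zmap L (fourierMask d δ b) a (xpm d δ p q (-1))‖ ^ 2
        ≤ C * ((2 * δ - 1 : ℕ) : ℝ) ^ ((1 : ℝ) / 2) * ((δ : ℝ) / (a : ℝ)) * p ^ 2
            / (Real.exp (1 / b) - 1) ^ 2 := by
  classical
  refine ⟨16, by norm_num, ?_⟩
  intro d δ a L b p q hd hdev hδ h4 ha hL hdal h1a haδ hb hp hpq
  have hdev' : d % 2 = 0 := Nat.even_iff.mp hdev
  have hE : (0:ℝ) < Real.exp (1/b) - 1 := by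
    have h2 : Real.exp 0 < Real.exp (1/b) := Real.exp_lt_exp.mpr (by positivity)
    rw [Real.exp_zero] at h2; linarith
  have hxpos : (0:ℝ) < ((2*δ-1:ℕ):ℝ) := by
    have : 0 < 2*δ-1 := by omega
    exact_mod_cast this
  have hBd0 : (0:ℝ) ≤ 2 * p * (((2*δ-1:ℕ):ℝ) ^ (-(1:ℝ)/4) / (Real.exp (1/b) - 1)) := by
    have hM : (0:ℝ) < ((2*δ-1:ℕ):ℝ) ^ (-(1:ℝ)/4) := Real.rpow_pos_of_pos hxpos _
    positivity
  set Zp := Zmap L (fourierMask d δ b) a (xpm d δ p q 1) with hZp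
  set Zm := Zmap L (fourierMask d δ b) a (xpm d δ p q (-1)) with hZm
  have hnorm : ‖Zp - Zm‖ ^ 2 = ∑ kl : Fin (2*δ-1) × Fin L, ((Zp - Zm) kl) ^ 2 := by
    rw [EuclideanSpace.norm_eq, Real.sq_sqrt (by positivity)]
    exact Finset.sum_congr rfl fun kl _ => by rw [Real.norm_eq_abs, sq_abs]
  rw [hnorm]
  have hM2 : (((2*δ-1:ℕ):ℝ) ^ (-(1:ℝ)/4))^2 = ((2*δ-1:ℕ):ℝ) ^ (-(1:ℝ)/2) := by
    rw [sq, ← Real.rpow_add hxpos]; norm_num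
  have hKx : ((2*δ-1:ℕ):ℝ) * ((2*δ-1:ℕ):ℝ) ^ (-(1:ℝ)/2) = ((2*δ-1:ℕ):ℝ) ^ ((1:ℝ)/2) := by
    nth_rewrite 1 [← Real.rpow_one (((2*δ-1:ℕ):ℝ))]
    rw [← Real.rpow_add hxpos]; norm_num
  have hsum1 : ∑ kl : Fin (2*δ-1) × Fin L, ((Zp - Zm) kl) ^ 2
      = ∑ k : Fin (2*δ-1), ∑ ℓ : Fin L, ((Zp - Zm) (k, ℓ)) ^ 2 :=
    Fintype.sum_prod_type _
  rw [hsum1]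
  have hstep1 : ∑ k : Fin (2*δ-1), ∑ ℓ : Fin L, ((Zp - Zm) (k, ℓ)) ^ 2
      ≤ ∑ k : Fin (2*δ-1), ∑ ℓ : Fin L,
        (if (d/2 - 1 + ((ℓ:ℕ)+1)*a) % d < δ - 1 ∨ (d - δ - 1 + ((ℓ:ℕ)+1)*a) % d < δ - 1
          then 2 * p * (((2*δ-1:ℕ):ℝ) ^ (-(1:ℝ)/4) / (Real.exp (1/b) - 1)) else 0) ^ 2 := by
    refine Finset.sum_le_sum fun k _ => Finset.sum_le_sum fun ℓ _ => ?_
    have h1 := entry_bound' d δ a L b p q hd hdev' hδ h4 ha hL hdal haδ hb hp hpq k ℓ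
    have hsub : (Zp - Zm) (k, ℓ) = Zp (k, ℓ) - Zm (k, ℓ) := rfl
    rw [hsub, ← sq_abs]
    exact pow_le_pow_left₀ (abs_nonneg _) h1 2
  have hstep2 : ∑ k : Fin (2*δ-1), ∑ ℓ : Fin L,
        (if (d/2 - 1 + ((ℓ:ℕ)+1)*a) % d < δ - 1 ∨ (d - δ - 1 + ((ℓ:ℕ)+1)*a) % d < δ - 1
          then 2 * p * (((2*δ-1:ℕ):ℝ) ^ (-(1:ℝ)/4) / (Real.exp (1/b) - 1)) else 0) ^ 2
      = ((2*δ-1:ℕ):ℝ) * ∑ ℓ : Fin L,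
        (if (d/2 - 1 + ((ℓ:ℕ)+1)*a) % d < δ - 1 ∨ (d - δ - 1 + ((ℓ:ℕ)+1)*a) % d < δ - 1
          then 2 * p * (((2*δ-1:ℕ):ℝ) ^ (-(1:ℝ)/4) / (Real.exp (1/b) - 1)) else 0) ^ 2 := by
    rw [Finset.sum_const, Finset.card_univ, Fintype.card_fin, nsmul_eq_mul]
  have hstep3 : ∑ ℓ : Fin L,
        (if (d/2 - 1 + ((ℓ:ℕ)+1)*a) % d < δ - 1 ∨ (d - δ - 1 + ((ℓ:ℕ)+1)*a) % d < δ - 1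
          then 2 * p * (((2*δ-1:ℕ):ℝ) ^ (-(1:ℝ)/4) / (Real.exp (1/b) - 1)) else 0) ^ 2
      = ((Finset.univ.filter (fun ℓ : Fin L =>
          (d/2 - 1 + ((ℓ:ℕ)+1)*a) % d < δ - 1 ∨ (d - δ - 1 + ((ℓ:ℕ)+1)*a) % d < δ - 1)).card : ℝ)
        * (2 * p * (((2*δ-1:ℕ):ℝ) ^ (-(1:ℝ)/4) / (Real.exp (1/b) - 1))) ^ 2 := by
    have hite : ∀ ℓ : Fin L,
        (if (d/2 - 1 + ((ℓ:ℕ)+1)*a) % d < δ - 1 ∨ (d - δ - 1 + ((ℓ:ℕ)+1)*a) % d < δ - 1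
          then 2 * p * (((2*δ-1:ℕ):ℝ) ^ (-(1:ℝ)/4) / (Real.exp (1/b) - 1)) else 0) ^ 2
        = (if (d/2 - 1 + ((ℓ:ℕ)+1)*a) % d < δ - 1 ∨ (d - δ - 1 + ((ℓ:ℕ)+1)*a) % d < δ - 1
          then (2 * p * (((2*δ-1:ℕ):ℝ) ^ (-(1:ℝ)/4) / (Real.exp (1/b) - 1))) ^ 2 else 0) := by
      intro ℓ; split_ifs <;> simp
    rw [Finset.sum_congr rfl fun ℓ _ => hite ℓ, ← Finset.sum_filter, Finset.sum_const,
      nsmul_eq_mul]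
  -- counting
  have hcount : ((Finset.univ.filter (fun ℓ : Fin L =>
        (d/2 - 1 + ((ℓ:ℕ)+1)*a) % d < δ - 1 ∨ (d - δ - 1 + ((ℓ:ℕ)+1)*a) % d < δ - 1)).card : ℝ)
      ≤ 4 * ((δ:ℝ) / (a:ℝ)) := by
    have hsplit : (Finset.univ.filter (fun ℓ : Fin L =>
        (d/2 - 1 + ((ℓ:ℕ)+1)*a) % d < δ - 1 ∨ (d - δ - 1 + ((ℓ:ℕ)+1)*a) % d < δ - 1)).card
        ≤ 2 * ((δ-1)/a + 1) := by
      have h1 := count_filter_mod' d a L (d/2 - 1) (δ-1) hdal ha hL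
      have h2 := count_filter_mod' d a L (d - δ - 1) (δ-1) hdal ha hL
      calc (Finset.univ.filter (fun ℓ : Fin L =>
          (d/2 - 1 + ((ℓ:ℕ)+1)*a) % d < δ - 1 ∨ (d - δ - 1 + ((ℓ:ℕ)+1)*a) % d < δ - 1)).card
          = ((Finset.univ.filter (fun ℓ : Fin L => (d/2 - 1 + ((ℓ:ℕ)+1)*a) % d < δ - 1))
            ∪ (Finset.univ.filter (fun ℓ : Fin L => (d - δ - 1 + ((ℓ:ℕ)+1)*a) % d < δ - 1))).card := by
            rw [← Finset.filter_or]
        _ ≤ _ + _ := Finset.card_union_le _ _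
        _ ≤ 2 * ((δ-1)/a + 1) := by omega
    have hc1 : ((Finset.univ.filter (fun ℓ : Fin L =>
        (d/2 - 1 + ((ℓ:ℕ)+1)*a) % d < δ - 1 ∨ (d - δ - 1 + ((ℓ:ℕ)+1)*a) % d < δ - 1)).card : ℝ)
        ≤ 2 * ((((δ-1)/a : ℕ) : ℝ) + 1) := by exact_mod_cast hsplit
    have hc2 : ((((δ-1)/a : ℕ) : ℝ)) ≤ ((δ-1 : ℕ) : ℝ) / (a:ℝ) := Nat.cast_div_le
    have hc3 : ((δ-1 : ℕ) : ℝ) / (a:ℝ) ≤ (δ:ℝ) / (a:ℝ) :=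
      (div_le_div_iff_of_pos_right (by exact_mod_cast ha)).mpr (by exact_mod_cast Nat.sub_le δ 1)
    have hc4 : (1:ℝ) ≤ (δ:ℝ) / (a:ℝ) := by
      rw [le_div_iff₀ (by exact_mod_cast ha)]
      have : (a:ℝ) ≤ (δ:ℝ) := by exact_mod_cast haδ.le
      linarith
    linarith
  have hBd2 : (0:ℝ) ≤ (2 * p * (((2*δ-1:ℕ):ℝ) ^ (-(1:ℝ)/4) / (Real.exp (1/b) - 1)))^2 := sq_nonneg _
  calc ∑ k : Fin (2*δ-1), ∑ ℓ : Fin L, ((Zp - Zm) (k, ℓ)) ^ 2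
      ≤ _ := hstep1
    _ = ((2*δ-1:ℕ):ℝ) * (((Finset.univ.filter (fun ℓ : Fin L =>
          (d/2 - 1 + ((ℓ:ℕ)+1)*a) % d < δ - 1 ∨ (d - δ - 1 + ((ℓ:ℕ)+1)*a) % d < δ - 1)).card : ℝ)
        * (2 * p * (((2*δ-1:ℕ):ℝ) ^ (-(1:ℝ)/4) / (Real.exp (1/b) - 1))) ^ 2) := by
        rw [hstep2, hstep3]
    _ ≤ ((2*δ-1:ℕ):ℝ) * ((4 * ((δ:ℝ) / (a:ℝ)))
        * (2 * p * (((2*δ-1:ℕ):ℝ) ^ (-(1:ℝ)/4) / (Real.exp (1/b) - 1))) ^ 2) := by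
        apply mul_le_mul_of_nonneg_left (mul_le_mul_of_nonneg_right hcount hBd2) hxpos.le
    _ = 16 * ((2*δ-1:ℕ):ℝ) ^ ((1:ℝ)/2) * ((δ:ℝ)/(a:ℝ)) * p^2 / (Real.exp (1/b) - 1)^2 := by
        rw [mul_pow, mul_pow, div_pow, hM2, ← hKx]; ring
end
end
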